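/- arXiv:1101.0287 — 6 statements merged into one kernel-verified Lean document; each statement's English description precedes it below -/
import Mathlib

section
/- Let Δ > 0 and let g : [0,Δ] → ℝ be a continuous function such that lim_{x→0+} g(x)/x exists (finite). Let a : (0,∞) → ℝ be bounded, let b : (0,∞) → [0,Δ], and let γ : (0,∞) → (0,∞). Then δ·[ Σ_{k=0}^∞ a(δ)·g(b(δ)·e^{−(2k+1)δ}) − (1/(2π))·∬_{ℝ²} a(δ)·g(b(δ)·σ_δ^{(γ(δ))}(x,ξ)) dx dξ ] → 0 as δ → 0+. -/
open Real Filter Set MeasureTheory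




section SzegoAux

private lemma szego_cont_comp {Δ : ℝ} {g : ℝ → ℝ} (hg : ContinuousOn g (Set.Icc 0 Δ))
    {X : Type} [TopologicalSpace X] {u : X → ℝ} (hu : Continuous u)
    (hmem : ∀ p, u p ∈ Set.Icc 0 Δ) : Continuous fun p => g (u p) := by
  rw [← continuousOn_univ]
  exact hg.comp hu.continuousOn (fun p _ => hmem p)

private lemma szego_tanh_pos {δ : ℝ} (hδ : 0 < δ) : 0 < Real.tanh δ := by
  rw [Real.tanh_eq_sinh_div_cosh]
  exact div_pos (by rwa [Real.sinh_pos_iff]) (Real.cosh_pos δ)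

private lemma szego_g_zero {Δ : ℝ} (hΔ : 0 < Δ) {g : ℝ → ℝ}
    (hg : ContinuousOn g (Set.Icc 0 Δ)) {L : ℝ}
    (hL : Tendsto (fun x : ℝ => g x / x) (nhdsWithin 0 (Set.Ioi 0)) (nhds L)) :
    g 0 = 0 := by
  have hne : (nhdsWithin (0:ℝ) (Ioo 0 Δ)).NeBot := by
    rw [← mem_closure_iff_nhdsWithin_neBot, closure_Ioo hΔ.ne]
    exact ⟨le_rfl, hΔ.le⟩
  have T1 : Tendsto g (nhdsWithin 0 (Ioo 0 Δ)) (nhds (g 0)) :=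
    ((hg 0 ⟨le_rfl, hΔ.le⟩).mono Ioo_subset_Icc_self)
  have T2 : Tendsto g (nhdsWithin 0 (Ioi 0)) (nhds 0) := by
    have hx : Tendsto (fun x : ℝ => x) (nhdsWithin (0:ℝ) (Ioi 0)) (nhds 0) :=
      tendsto_id.mono_left nhdsWithin_le_nhds
    have := hL.mul hx
    rw [mul_zero] at this
    refine this.congr' ?_
    filter_upwards [self_mem_nhdsWithin] with x hx2
    exact div_mul_cancel₀ _ (ne_of_gt hx2)
  exact tendsto_nhds_unique T1 (T2.mono_left (nhdsWithin_mono 0 Ioo_subset_Ioi_self))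

private lemma szego_linear_bound {Δ : ℝ} (hΔ : 0 < Δ) {g : ℝ → ℝ}
    (hg : ContinuousOn g (Set.Icc 0 Δ)) {L : ℝ}
    (hL : Tendsto (fun x : ℝ => g x / x) (nhdsWithin 0 (Set.Ioi 0)) (nhds L)) :
    ∃ K : ℝ, 0 < K ∧ ∀ x ∈ Set.Icc 0 Δ, |g x| ≤ K * x := by
  have h0 : g 0 = 0 := szego_g_zero hΔ hg hL
  have hev : ∀ᶠ x in nhdsWithin (0:ℝ) (Ioi 0), |g x / x - L| < 1 := by
    have := Metric.tendsto_nhds.mp hL 1 one_pos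
    simpa [Real.dist_eq] using this
  rw [eventually_nhdsWithin_iff, Metric.eventually_nhds_iff] at hev
  obtain ⟨η, hη, hηs⟩ := hev
  obtain ⟨C, hC⟩ := isCompact_Icc.exists_bound_of_continuousOn hg
  set η2 : ℝ := min (η / 2) Δ with hη2def
  have hη2 : 0 < η2 := lt_min (by linarith) hΔ
  refine ⟨(|L| + 1) + (|C| + 1) / η2, by positivity, ?_⟩
  rintro x ⟨hx0, hxΔ⟩
  rcases eq_or_lt_of_le hx0 with rfl | hx0'
  · simp [h0]
  rcases lt_or_ge x η2 with hxs | hxl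
  · have hxη : dist x 0 < η := by
      rw [Real.dist_eq, sub_zero, abs_of_pos hx0']
      have : η2 ≤ η / 2 := min_le_left _ _
      linarith
    have h1 : |g x / x| ≤ |L| + 1 := by
      have h2 := hηs hxη hx0'
      calc |g x / x| = |(g x / x - L) + L| := by ring_nf
        _ ≤ |g x / x - L| + |L| := abs_add_le _ _
        _ ≤ |L| + 1 := by linarith
    have h3 : |g x| = |g x / x| * x := by
      rw [abs_div, abs_of_pos hx0', div_mul_cancel₀ _ hx0'.ne']
    have h4 : |g x| ≤ (|L| + 1) * x := by
      rw [h3]; exact mul_le_mul_of_nonneg_right h1 hx0'.le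
    nlinarith [div_nonneg (by positivity : (0:ℝ) ≤ |C| + 1) hη2.le]
  · have h5 : |g x| ≤ C := by simpa [Real.norm_eq_abs] using hC x ⟨hx0, hxΔ⟩
    have h6 : C ≤ (|C| + 1) / η2 * x := by
      have h7 : (1:ℝ) ≤ x / η2 := (one_le_div hη2).mpr hxl
      have h8 : C ≤ |C| + 1 := (le_abs_self C).trans (by linarith)
      calc C ≤ |C| + 1 := h8
        _ = (|C| + 1) * 1 := (mul_one _).symm
        _ ≤ (|C| + 1) * (x / η2) := mul_le_mul_of_nonneg_left h7 (by positivity)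
        _ = (|C| + 1) / η2 * x := by ring
    nlinarith [abs_nonneg L]

end SzegoAux

private lemma szego_integrableOn_Ioi {Δ K : ℝ} (hK : 0 < K) {g : ℝ → ℝ}
    (hg : ContinuousOn g (Set.Icc 0 Δ)) (hKb : ∀ x ∈ Set.Icc 0 Δ, |g x| ≤ K * x)
    {b : ℝ} (hb : b ∈ Set.Icc 0 Δ) {m : ℝ} (hm : 0 ≤ m) :
    IntegrableOn (fun t => g (b * Real.exp (-t))) (Set.Ioi m) := by
  obtain ⟨hb0, hbΔ⟩ := hb
  have hmaps : ∀ t ∈ Ioi m, b * Real.exp (-t) ∈ Set.Icc 0 Δ := by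
    intro t ht
    constructor
    · positivity
    · have h1 : Real.exp (-t) ≤ 1 := by
        rw [Real.exp_le_one_iff]; simp only [mem_Ioi] at ht; linarith
      nlinarith [Real.exp_pos (-t)]
  have hcont : ContinuousOn (fun t => g (b * Real.exp (-t))) (Ioi m) :=
    hg.comp ((continuous_const.mul (Real.continuous_exp.comp continuous_neg)).continuousOn)
      hmaps
  have hmeas : AEStronglyMeasurable (fun t => g (b * Real.exp (-t)))
      (volume.restrict (Ioi m)) :=
    (hcont.aemeasurable measurableSet_Ioi).aestronglyMeasurable
  refine Integrable.mono' (((exp_neg_integrableOn_Ioi m one_pos)).const_mul (K * Δ)) hmeas ?_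
  rw [ae_restrict_iff' measurableSet_Ioi]
  refine Filter.Eventually.of_forall fun t ht => ?_
  have h2 := hKb _ (hmaps t ht)
  rw [Real.norm_eq_abs]
  calc |g (b * Real.exp (-t))| ≤ K * (b * Real.exp (-t)) := h2
    _ ≤ K * Δ * Real.exp (-1*t) := by
        rw [neg_one_mul]
        have := mul_nonneg (mul_nonneg hK.le (sub_nonneg.mpr hbΔ)) (Real.exp_pos (-t)).le
        nlinarith

private lemma szego_integral_eq {Δ K : ℝ} (hΔ : 0 < Δ) (hK : 0 < K) {g : ℝ → ℝ}
    (hg : ContinuousOn g (Set.Icc 0 Δ)) (hKb : ∀ x ∈ Set.Icc 0 Δ, |g x| ≤ K * x)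
    {b : ℝ} (hb : b ∈ Set.Icc 0 Δ) {δ γ : ℝ} (hδ : 0 < δ) (hγ : 0 < γ) :
    ∫ p : ℝ × ℝ, g (b * ((Real.cosh δ)⁻¹ *
        Real.exp (-(Real.tanh δ) * (γ⁻¹ ^ 2 * p.1 ^ 2 + γ ^ 2 * p.2 ^ 2))))
      = (π / Real.tanh δ) * ∫ t in Set.Ioi (Real.log (Real.cosh δ)), g (b * Real.exp (-t)) := by
  obtain ⟨hb0, hbΔ⟩ := hb
  set c : ℝ := Real.tanh δ with hcdef
  have hc : 0 < c := by
    rw [hcdef, Real.tanh_eq_sinh_div_cosh]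
    exact div_pos (by rwa [Real.sinh_pos_iff]) (Real.cosh_pos δ)
  set C : ℝ := (Real.cosh δ)⁻¹ with hCdef
  have hCpos : 0 < C := by positivity
  have hC1 : C ≤ 1 := by
    rw [hCdef]
    exact inv_le_one_of_one_le₀ (Real.one_le_cosh δ)
  set m : ℝ := Real.log (Real.cosh δ) with hmdef
  set h : ℝ → ℝ := fun q => g (b * (C * Real.exp (-c * q))) with hhdef
  have hmem : ∀ q : ℝ, 0 ≤ q → b * (C * Real.exp (-c * q)) ∈ Set.Icc 0 Δ := by
    intro q hq
    have he1 : Real.exp (-c * q) ≤ 1 := by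
      rw [Real.exp_le_one_iff]; nlinarith
    have h4 : C * Real.exp (-c * q) ≤ 1 := by nlinarith [Real.exp_pos (-c * q)]
    have h5 := mul_le_mul_of_nonneg_left h4 hb0
    constructor
    · positivity
    · nlinarith
  -- generic integrability
  have key : ∀ A B : ℝ, 0 < A → 0 < B →
      Integrable (fun p : ℝ × ℝ => h (A * p.1 ^ 2 + B * p.2 ^ 2)) := by
    intro A B hA hB
    have hcontu : Continuous fun p : ℝ × ℝ =>
        b * (C * Real.exp (-c * (A * p.1 ^ 2 + B * p.2 ^ 2))) := by fun_prop
    have hcont : Continuous fun p : ℝ × ℝ => h (A * p.1 ^ 2 + B * p.2 ^ 2) := by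
      rw [← continuousOn_univ]
      exact hg.comp hcontu.continuousOn
        (fun p _ => hmem _ (by positivity))
    have hboundInt : Integrable (fun p : ℝ × ℝ =>
        K * Δ * (Real.exp (-(c*A) * p.1 ^ 2) * Real.exp (-(c*B) * p.2 ^ 2))) := by
      rw [Measure.volume_eq_prod]
      exact ((integrable_exp_neg_mul_sq (by positivity)).mul_prod
        (integrable_exp_neg_mul_sq (by positivity))).const_mul _
    refine hboundInt.mono' hcont.aestronglyMeasurable ?_
    refine Filter.Eventually.of_forall fun p => ?_
    have hq : (0:ℝ) ≤ A * p.1 ^ 2 + B * p.2 ^ 2 := by positivity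
    have h2 := hKb _ (hmem _ hq)
    have h3 : Real.exp (-c * (A * p.1 ^ 2 + B * p.2 ^ 2))
        = Real.exp (-(c*A) * p.1 ^ 2) * Real.exp (-(c*B) * p.2 ^ 2) := by
      rw [← Real.exp_add]; ring_nf
    rw [Real.norm_eq_abs, hhdef]
    calc |g (b * (C * Real.exp (-c * (A * p.1^2 + B * p.2^2))))|
        ≤ K * (b * (C * Real.exp (-c * (A * p.1^2 + B * p.2^2)))) := h2
      _ ≤ K * Δ * Real.exp (-c * (A * p.1^2 + B * p.2^2)) := by
          have hbC : b * C ≤ Δ := by nlinarith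
          have := mul_nonneg (mul_nonneg hK.le (sub_nonneg.mpr hbC))
            (Real.exp_pos (-c * (A * p.1^2 + B * p.2^2))).le
          nlinarith
      _ = K * Δ * (Real.exp (-(c*A) * p.1 ^ 2) * Real.exp (-(c*B) * p.2 ^ 2)) := by
          rw [h3, mul_assoc]
  -- Fubini & scaling
  set W : ℝ → ℝ := fun u => ∫ v : ℝ, h (u ^ 2 + v ^ 2) with hWdef
  have hWval : ∀ x : ℝ, (∫ ξ : ℝ, h (γ⁻¹ ^ 2 * x ^ 2 + γ ^ 2 * ξ ^ 2)) = γ⁻¹ * W (γ⁻¹ * x) := by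
    intro x
    have h1 := Measure.integral_comp_mul_left (fun v => h ((γ⁻¹ * x) ^ 2 + v ^ 2)) γ
    have h2 : ∀ ξ : ℝ, h ((γ⁻¹ * x) ^ 2 + (γ * ξ) ^ 2) = h (γ⁻¹ ^ 2 * x ^ 2 + γ ^ 2 * ξ ^ 2) := by
      intro ξ; congr 1; field_simp
    simp only [h2] at h1
    rw [h1, abs_of_pos (by positivity : (0:ℝ) < γ⁻¹), smul_eq_mul, hWdef]
  have hInt1 : Integrable (fun p : ℝ × ℝ => h (γ⁻¹ ^ 2 * p.1 ^ 2 + γ ^ 2 * p.2 ^ 2)) :=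
    key _ _ (by positivity) (by positivity)
  have hInt2 : Integrable (fun p : ℝ × ℝ => h (p.1 ^ 2 + p.2 ^ 2)) := by
    have := key 1 1 one_pos one_pos; simpa using this
  have E1 : (∫ p : ℝ × ℝ, h (γ⁻¹ ^ 2 * p.1 ^ 2 + γ ^ 2 * p.2 ^ 2))
      = ∫ p : ℝ × ℝ, h (p.1 ^ 2 + p.2 ^ 2) := by
    rw [Measure.volume_eq_prod] at hInt1 hInt2
    rw [show (volume : Measure (ℝ × ℝ)) = (volume : Measure ℝ).prod volume from
      Measure.volume_eq_prod ℝ ℝ]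
    rw [integral_prod _ hInt1, integral_prod _ hInt2]
    calc (∫ x : ℝ, ∫ ξ : ℝ, h (γ⁻¹ ^ 2 * x ^ 2 + γ ^ 2 * ξ ^ 2))
        = ∫ x : ℝ, γ⁻¹ * W (γ⁻¹ * x) := by
          exact integral_congr_ae (Filter.Eventually.of_forall fun x => hWval x)
      _ = γ⁻¹ * ∫ x : ℝ, W (γ⁻¹ * x) := integral_const_mul _ _
      _ = γ⁻¹ * (|γ⁻¹⁻¹| • ∫ u : ℝ, W u) := by rw [Measure.integral_comp_mul_left W γ⁻¹]
      _ = ∫ u : ℝ, W u := by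
          rw [inv_inv, abs_of_pos hγ, smul_eq_mul, ← mul_assoc, inv_mul_cancel₀ hγ.ne', one_mul]
      _ = ∫ x : ℝ, ∫ v : ℝ, h (x ^ 2 + v ^ 2) := rfl
  have E5 : (∫ p : ℝ × ℝ, h (p.1 ^ 2 + p.2 ^ 2)) = (2 * π) * ∫ r in Ioi (0:ℝ), r * h (r ^ 2) := by
    rw [← integral_comp_polarCoord_symm (fun p : ℝ × ℝ => h (p.1 ^ 2 + p.2 ^ 2))]
    have hpt : ∀ p : ℝ × ℝ, p.1 • h ((polarCoord.symm p).1 ^ 2 + (polarCoord.symm p).2 ^ 2)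
        = (fun r : ℝ => r * h (r ^ 2)) p.1 * (fun _ : ℝ => (1:ℝ)) p.2 := by
      intro p
      rw [polarCoord_symm_apply]
      simp only [smul_eq_mul, mul_one]
      congr 2
      rw [mul_pow, mul_pow, ← mul_add, add_comm ((Real.cos p.2) ^ 2), Real.sin_sq_add_cos_sq,
        mul_one]
    rw [polarCoord_target]
    calc ∫ p in Ioi (0:ℝ) ×ˢ Ioo (-π) π,
          p.1 • h ((polarCoord.symm p).1 ^ 2 + (polarCoord.symm p).2 ^ 2)
        = ∫ p in Ioi (0:ℝ) ×ˢ Ioo (-π) π,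
            (fun r : ℝ => r * h (r ^ 2)) p.1 * (fun _ : ℝ => (1:ℝ)) p.2 := by
          exact integral_congr_ae (Filter.Eventually.of_forall fun p => hpt p)
      _ = (∫ r in Ioi (0:ℝ), r * h (r ^ 2)) * ∫ θ in Ioo (-π) π, (1:ℝ) := by
          rw [Measure.volume_eq_prod ℝ ℝ, ← Measure.prod_restrict]
          exact integral_prod_mul (L := ℝ) (fun r : ℝ => r * h (r ^ 2)) (fun _ : ℝ => (1:ℝ))
      _ = (2 * π) * ∫ r in Ioi (0:ℝ), r * h (r ^ 2) := by
          rw [setIntegral_const, measureReal_def, Real.volume_Ioo, smul_eq_mul, mul_one,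
            ENNReal.toReal_ofReal (by linarith [Real.pi_pos] : (0:ℝ) ≤ π - (-π))]
          ring
  have E6 : (∫ r in Ioi (0:ℝ), r * h (r ^ 2)) = (1/2) * ∫ y in Ioi (0:ℝ), h y := by
    have h1 := integral_comp_rpow_Ioi h (p := 2) (by norm_num : (2:ℝ) ≠ 0)
    have h2 : EqOn (fun x : ℝ => (|(2:ℝ)| * x ^ ((2:ℝ) - 1)) • h (x ^ (2:ℝ)))
        (fun x : ℝ => 2 * (x * h (x ^ 2))) (Ioi 0) := by
      intro x hx
      have hx0 : (0:ℝ) < x := hx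
      have e1 : x ^ ((2:ℝ) - 1) = x := by norm_num
      have e2 : x ^ (2:ℝ) = x ^ 2 := by
        rw [show (2:ℝ) = ((2:ℕ):ℝ) by norm_num, Real.rpow_natCast]
      simp only [e1, e2, smul_eq_mul]
      rw [abs_of_pos (by norm_num : (0:ℝ) < 2)]
      ring
    rw [setIntegral_congr_fun measurableSet_Ioi h2, integral_const_mul] at h1
    rw [← h1]; ring
  set ψ : ℝ → ℝ := fun t => g (b * Real.exp (-t)) with hψdef
  have hCm : C = Real.exp (-m) := by
    rw [hCdef, hmdef, Real.exp_neg, Real.exp_log (Real.cosh_pos δ)]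
  have hhψ : ∀ y : ℝ, h y = ψ (c * y + m) := by
    intro y
    show g (b * (C * Real.exp (-c * y))) = g (b * Real.exp (-(c * y + m)))
    congr 1
    rw [hCm, ← Real.exp_add]
    congr 2
    ring
  have E7 : (∫ y in Ioi (0:ℝ), h y) = c⁻¹ * ∫ t in Ioi m, ψ t := by
    have h1 := integral_comp_mul_left_Ioi (fun u => ψ (u + m)) 0 hc
    simp only [mul_zero] at h1
    have h2 : (∫ x in Ioi (0:ℝ), ψ (x + m)) = ∫ t in Ioi m, ψ t := by
      have A := measurePreserving_add_right (volume : Measure ℝ) m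
      have B : MeasurableEmbedding (fun x : ℝ => x + m) :=
        (Homeomorph.addRight m).measurableEmbedding
      rw [← A.setIntegral_image_emb B ψ (Ioi 0), image_add_const_Ioi, zero_add]
    calc (∫ y in Ioi (0:ℝ), h y) = ∫ y in Ioi (0:ℝ), ψ (c * y + m) :=
          setIntegral_congr_fun measurableSet_Ioi fun y _ => hhψ y
      _ = c⁻¹ • ∫ x in Ioi (0:ℝ), ψ (x + m) := h1
      _ = c⁻¹ * ∫ t in Ioi m, ψ t := by rw [h2, smul_eq_mul]
  have main : (∫ p : ℝ × ℝ, h (γ⁻¹ ^ 2 * p.1 ^ 2 + γ ^ 2 * p.2 ^ 2))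
      = (π / c) * ∫ t in Ioi m, ψ t := by
    rw [E1, E5, E6, E7]
    field_simp
  exact main


set_option maxHeartbeats 2000000 in
private lemma szego_sum_side {Δ K : ℝ} (hΔ : 0 < Δ) (hK : 0 < K) {g : ℝ → ℝ}
    (hg : ContinuousOn g (Set.Icc 0 Δ)) (hKb : ∀ x ∈ Set.Icc 0 Δ, |g x| ≤ K * x)
    {ε : ℝ} (hε : 0 < ε) :
    ∃ δ₀ > 0, ∀ δ : ℝ, 0 < δ → δ < δ₀ → ∀ b ∈ Set.Icc (0:ℝ) Δ,
      |δ * (∑' k : ℕ, g (b * Real.exp (-((2 * (k:ℝ) + 1) * δ))))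
        - (1/2) * ∫ t in Set.Ioi (0:ℝ), g (b * Real.exp (-t))| ≤ ε := by
  have huc := isCompact_Icc.uniformContinuousOn_of_continuous hg
  rw [Metric.uniformContinuousOn_iff] at huc
  set T : ℝ := max 1 (Real.log ((4*K*Δ+4)/ε)) with hTdef
  have hT1 : 1 ≤ T := le_max_left _ _
  have htail : 2*K*Δ*Real.exp (-T) < ε/2 := by
    have h1 : Real.exp (-T) ≤ Real.exp (-(Real.log ((4*K*Δ+4)/ε))) := by
      rw [Real.exp_le_exp]
      have := le_max_right 1 (Real.log ((4*K*Δ+4)/ε)); linarith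
    have h2 : Real.exp (-(Real.log ((4*K*Δ+4)/ε))) = ε/(4*K*Δ+4) := by
      rw [Real.exp_neg, Real.exp_log (by positivity), inv_div]
    have h3 := h1.trans_eq h2
    have hKΔ : 0 < K*Δ := by positivity
    calc 2*K*Δ*Real.exp (-T) ≤ 2*K*Δ*(ε/(4*K*Δ+4)) := by nlinarith
      _ = (2*K*Δ*ε)/(4*K*Δ+4) := by ring
      _ < ε/2 := by
          rw [div_lt_div_iff₀ (by positivity) (by norm_num : (0:ℝ) < 2)]
          nlinarith
  set ε₃ : ℝ := ε/(T+2) with hε₃def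
  have hε₃ : 0 < ε₃ := by
    apply div_pos hε; linarith
  obtain ⟨θ, hθpos, hθ⟩ := huc ε₃ hε₃
  refine ⟨min (θ/(2*Δ+1)) (1/2), lt_min (by positivity) (by norm_num), ?_⟩
  intro δ hδ hδ₀ b hb
  obtain ⟨hb0, hbΔ⟩ := hb
  have hδhalf : δ ≤ 1/2 := le_of_lt (lt_of_lt_of_le hδ₀ (min_le_right _ _))
  have hδθ : 2*Δ*δ < θ := by
    have h4 := lt_of_lt_of_le hδ₀ (min_le_left _ _)
    rw [lt_div_iff₀ (by positivity)] at h4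
    nlinarith
  set ψ : ℝ → ℝ := fun t => g (b * Real.exp (-t)) with hψdef
  set lam : ℕ → ℝ := fun k => Real.exp (-((2*(k:ℝ)+1)*δ)) with hlamdef
  have hbmem : ∀ t : ℝ, 0 ≤ t → b * Real.exp (-t) ∈ Icc 0 Δ := by
    intro t ht
    have h1 : Real.exp (-t) ≤ 1 := by rw [Real.exp_le_one_iff]; linarith
    constructor
    · positivity
    · nlinarith [Real.exp_pos (-t)]
  have hJint : IntegrableOn ψ (Ioi 0) :=
    szego_integrableOn_Ioi hK hg hKb ⟨hb0, hbΔ⟩ le_rfl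
  set I : ℕ → Set ℝ := fun k => Ioc (2*(k:ℝ)*δ) (2*((k:ℝ)+1)*δ) with hIdef
  have hImeas : ∀ k, MeasurableSet (I k) := fun k => measurableSet_Ioc
  have hIdisj : Pairwise (Function.onFun Disjoint I) := by
    intro k l hkl
    simp only [Function.onFun, hIdef]
    rw [Set.disjoint_left]
    intro x hx1 hx2
    rcases lt_or_gt_of_ne hkl with h | h
    · have hcast : (k:ℝ) + 1 ≤ (l:ℝ) := by exact_mod_cast h
      have := hx1.2; have := hx2.1; nlinarith
    · have hcast : (l:ℝ) + 1 ≤ (k:ℝ) := by exact_mod_cast h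
      have := hx2.2; have := hx1.1; nlinarith
  have hIunion : (⋃ k, I k) = Ioi (0:ℝ) := by
    ext t
    simp only [mem_iUnion, hIdef, mem_Ioc, mem_Ioi]
    constructor
    · rintro ⟨k, hk1, hk2⟩
      have : (0:ℝ) ≤ (k:ℝ) := Nat.cast_nonneg k
      nlinarith
    · intro ht
      have htpos : 0 < t/(2*δ) := by positivity
      set n := ⌈t/(2*δ)⌉₊ with hndef
      have hn1 : 1 ≤ n := Nat.one_le_ceil_iff.mpr htpos
      refine ⟨n-1, ?_, ?_⟩
      · have h5 : ((n-1:ℕ):ℝ) < t/(2*δ) := Nat.lt_ceil.mp (by omega)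
        rw [lt_div_iff₀ (by positivity)] at h5
        nlinarith
      · have h6 := Nat.le_ceil (t/(2*δ))
        rw [div_le_iff₀ (by positivity)] at h6
        have hcast : ((n-1:ℕ):ℝ) + 1 = (n:ℝ) := by
          rw [Nat.cast_sub hn1]; norm_num
        rw [hcast]
        nlinarith
  have hIsub : ∀ k, I k ⊆ Ioi (0:ℝ) := by
    intro k
    rw [← hIunion]
    exact subset_iUnion I k
  have hHasSum : HasSum (fun k => ∫ t in I k, ψ t) (∫ t in Ioi (0:ℝ), ψ t) := by
    have h7 : IntegrableOn ψ (⋃ k, I k) := by rw [hIunion]; exact hJint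
    have := hasSum_integral_iUnion hImeas hIdisj h7
    rwa [hIunion] at this
  have hr0 : (0:ℝ) < Real.exp (-(2*δ)) := Real.exp_pos _
  have hr1 : Real.exp (-(2*δ)) < 1 := Real.exp_lt_one_iff.mpr (by linarith)
  have hgeo : Summable (fun k : ℕ => Real.exp (-(2*δ)) ^ k) :=
    summable_geometric_of_lt_one hr0.le hr1
  have hlam_pow : ∀ k : ℕ, Real.exp (-(2*(k:ℝ)*δ)) = Real.exp (-(2*δ)) ^ k := by
    intro k
    rw [← Real.exp_nat_mul]
    congr 1; ring
  have hlam_le : ∀ k : ℕ, lam k ≤ Real.exp (-(2*δ)) ^ k := by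
    intro k
    rw [← hlam_pow]
    show Real.exp (-((2*(k:ℝ)+1)*δ)) ≤ _
    rw [Real.exp_le_exp]
    have hk0 : (0:ℝ) ≤ (k:ℝ) := Nat.cast_nonneg k
    nlinarith
  have hlam_mem : ∀ k : ℕ, b * lam k ∈ Icc 0 Δ := by
    intro k
    apply hbmem
    positivity
  have hgb : ∀ k : ℕ, |g (b * lam k)| ≤ K*Δ*Real.exp (-(2*δ)) ^ k := by
    intro k
    calc |g (b * lam k)| ≤ K * (b * lam k) := hKb _ (hlam_mem k)
      _ = (K*b) * lam k := by ring
      _ ≤ (K*b) * Real.exp (-(2*δ)) ^ k :=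
          mul_le_mul_of_nonneg_left (hlam_le k) (by positivity)
      _ ≤ (K*Δ) * Real.exp (-(2*δ)) ^ k :=
          mul_le_mul_of_nonneg_right (by nlinarith) (by positivity)
      _ = K*Δ*Real.exp (-(2*δ)) ^ k := by ring
  have hS : Summable (fun k => g (b * lam k)) := by
    apply Summable.of_norm_bounded (hgeo.mul_left (K*Δ))
    intro k
    rw [Real.norm_eq_abs]
    exact hgb k
  -- per-interval bound
  have huk : ∀ k : ℕ, |δ * g (b * lam k) - (1/2) * ∫ t in I k, ψ t|
      ≤ δ * min ε₃ (2*K*Δ*Real.exp (-(2*δ)) ^ k) := by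
    intro k
    have hvolI : volume (I k) = ENNReal.ofReal (2*δ) := by
      rw [hIdef, Real.volume_Ioc]
      congr 1; ring
    have hvol : (volume (I k)).toReal = 2*δ := by
      rw [hvolI, ENNReal.toReal_ofReal (by positivity)]
    have hψint : IntegrableOn ψ (I k) := hJint.mono_set (hIsub k)
    have hcint : IntegrableOn (fun _ : ℝ => g (b * lam k)) (I k) := by
      exact integrableOn_const (by rw [hvolI]; exact ENNReal.ofReal_ne_top)
    have hconst : δ * g (b * lam k) = (1/2) * ∫ _ in I k, g (b * lam k) := by
      rw [setIntegral_const, measureReal_def, hvol, smul_eq_mul]; ring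
    have hbound : ∀ t ∈ I k, ‖g (b * lam k) - ψ t‖
        ≤ min ε₃ (2*K*Δ*Real.exp (-(2*δ)) ^ k) := by
      intro t ht
      obtain ⟨ht1, ht2⟩ := ht
      have htpos : 0 < t := lt_of_le_of_lt (by positivity) ht1
      have hx2mem : b * Real.exp (-t) ∈ Icc 0 Δ := hbmem t htpos.le
      have hEk : Real.exp (-t) ≤ Real.exp (-(2*(k:ℝ)*δ)) := by
        rw [Real.exp_le_exp]; linarith
      have hk0 : (0:ℝ) ≤ (k:ℝ) := Nat.cast_nonneg k
      have hEk' : lam k ≤ Real.exp (-(2*(k:ℝ)*δ)) := by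
        show Real.exp (-((2*(k:ℝ)+1)*δ)) ≤ _
        rw [Real.exp_le_exp]; nlinarith
      have hlow1 : Real.exp (-(2*((k:ℝ)+1)*δ)) ≤ Real.exp (-t) := by
        rw [Real.exp_le_exp]; linarith
      have hlow2 : Real.exp (-(2*((k:ℝ)+1)*δ)) ≤ lam k := by
        show _ ≤ Real.exp (-((2*(k:ℝ)+1)*δ))
        rw [Real.exp_le_exp]; nlinarith
      have hfac : Real.exp (-(2*((k:ℝ)+1)*δ)) = Real.exp (-(2*(k:ℝ)*δ)) * Real.exp (-(2*δ)) := by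
        rw [← Real.exp_add]; congr 1; ring
      have hEk1 : Real.exp (-(2*(k:ℝ)*δ)) ≤ 1 := by
        rw [Real.exp_le_one_iff]; nlinarith
      have hexp2δ : 1 - Real.exp (-(2*δ)) ≤ 2*δ := by
        have := Real.add_one_le_exp (-(2*δ)); linarith
      have hdistarg : |b * lam k - b * Real.exp (-t)| < θ := by
        have hd1 : |lam k - Real.exp (-t)| ≤ Real.exp (-(2*(k:ℝ)*δ)) * (1 - Real.exp (-(2*δ))) := by
          rw [abs_le]
          constructor
          · have := hfac ▸ hlow2
            nlinarith [Real.exp_pos (-(2*(k:ℝ)*δ))]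
          · have := hfac ▸ hlow1
            nlinarith [Real.exp_pos (-(2*(k:ℝ)*δ))]
        have hd2 : |b * lam k - b * Real.exp (-t)| = b * |lam k - Real.exp (-t)| := by
          rw [← mul_sub, abs_mul, abs_of_nonneg hb0]
        rw [hd2]
        have hnn : (0:ℝ) ≤ 1 - Real.exp (-(2*δ)) := by nlinarith
        have hprod_nn : (0:ℝ) ≤ Real.exp (-(2*(k:ℝ)*δ)) * (1 - Real.exp (-(2*δ))) :=
          mul_nonneg (Real.exp_pos _).le hnn
        calc b * |lam k - Real.exp (-t)|
            ≤ b * (Real.exp (-(2*(k:ℝ)*δ)) * (1 - Real.exp (-(2*δ)))) :=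
              mul_le_mul_of_nonneg_left hd1 hb0
          _ ≤ Δ * (Real.exp (-(2*(k:ℝ)*δ)) * (1 - Real.exp (-(2*δ)))) :=
              mul_le_mul_of_nonneg_right hbΔ hprod_nn
          _ ≤ Δ * (2*δ) := by
              have h17 : Real.exp (-(2*(k:ℝ)*δ)) * (1 - Real.exp (-(2*δ))) ≤ 2*δ := by
                nlinarith [mul_le_mul_of_nonneg_right hEk1 hnn]
              exact mul_le_mul_of_nonneg_left h17 (by linarith)
          _ < θ := by nlinarith
      have hsmall : |g (b * lam k) - g (b * Real.exp (-t))| < ε₃ := by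
        have := hθ _ (hlam_mem k) _ hx2mem (by rwa [Real.dist_eq])
        rwa [Real.dist_eq] at this
      have hbig : |g (b * lam k) - g (b * Real.exp (-t))| ≤ 2*K*Δ*Real.exp (-(2*δ)) ^ k := by
        have h10 := hKb _ (hlam_mem k)
        have h11 := hKb _ hx2mem
        have h12 : b * lam k ≤ Δ * Real.exp (-(2*(k:ℝ)*δ)) :=
          mul_le_mul hbΔ hEk' (Real.exp_pos _).le (by linarith)
        have h13 : b * Real.exp (-t) ≤ Δ * Real.exp (-(2*(k:ℝ)*δ)) :=
          mul_le_mul hbΔ hEk (Real.exp_pos _).le (by linarith)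
        have h14 := abs_sub (g (b * lam k)) (g (b * Real.exp (-t)))
        rw [← hlam_pow]
        have h15 : (0:ℝ) ≤ b * lam k := by positivity
        have h16 : (0:ℝ) ≤ b * Real.exp (-t) := by positivity
        calc |g (b * lam k) - g (b * Real.exp (-t))|
            ≤ |g (b * lam k)| + |g (b * Real.exp (-t))| := abs_sub _ _
          _ ≤ K * (b * lam k) + K * (b * Real.exp (-t)) := add_le_add h10 h11
          _ ≤ 2*K*Δ*Real.exp (-(2*(k:ℝ)*δ)) := by
              nlinarith [mul_le_mul_of_nonneg_left h12 hK.le,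
                mul_le_mul_of_nonneg_left h13 hK.le]
      rw [Real.norm_eq_abs]
      exact le_min hsmall.le hbig
    have hmeasb : AEStronglyMeasurable (fun t => g (b * lam k) - ψ t)
        (volume.restrict (I k)) :=
      aestronglyMeasurable_const.sub hψint.aestronglyMeasurable
    have hnorm := norm_setIntegral_le_of_norm_le_const
      (by rw [hvolI]; exact ENNReal.ofReal_lt_top) hbound
    rw [measureReal_def, hvol] at hnorm
    rw [hconst, ← mul_sub, ← integral_sub hcint hψint]
    rw [abs_mul, abs_of_nonneg (by norm_num : (0:ℝ) ≤ 1/2)]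
    rw [Real.norm_eq_abs] at hnorm
    calc 1/2 * |∫ t in I k, (g (b * lam k) - ψ t)|
        ≤ 1/2 * (min ε₃ (2*K*Δ*Real.exp (-(2*δ)) ^ k) * (2*δ)) := by
          have := hnorm; nlinarith [abs_nonneg (∫ t in I k, (g (b * lam k) - ψ t))]
      _ = δ * min ε₃ (2*K*Δ*Real.exp (-(2*δ)) ^ k) := by ring
  -- assemble the tsum estimate
  set N : ℕ := ⌈T/(2*δ)⌉₊ with hNdef
  set v : ℕ → ℝ := fun k => δ * min ε₃ (2*K*Δ*Real.exp (-(2*δ)) ^ k) with hvdef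
  have hv_nonneg : ∀ k, 0 ≤ v k := fun k =>
    mul_nonneg hδ.le (le_min hε₃.le (by positivity))
  have hv_le : ∀ k, v k ≤ δ*(2*K*Δ) * Real.exp (-(2*δ)) ^ k := by
    intro k
    calc v k ≤ δ * (2*K*Δ*Real.exp (-(2*δ)) ^ k) :=
          mul_le_mul_of_nonneg_left (min_le_right _ _) hδ.le
      _ = δ*(2*K*Δ) * Real.exp (-(2*δ)) ^ k := by ring
  have hvsum : Summable v :=
    Summable.of_nonneg_of_le hv_nonneg hv_le (hgeo.mul_left (δ*(2*K*Δ)))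
  have hsum1 : Summable fun k => δ * g (b * lam k) := hS.mul_left δ
  have hsum2 : Summable fun k => (1/2) * ∫ t in I k, ψ t := hHasSum.summable.mul_left _
  have hdiff : δ * (∑' k, g (b * lam k)) - (1/2) * (∫ t in Ioi (0:ℝ), ψ t)
      = ∑' k, (δ * g (b * lam k) - (1/2) * ∫ t in I k, ψ t) := by
    rw [Summable.tsum_sub hsum1 hsum2, tsum_mul_left, tsum_mul_left, hHasSum.tsum_eq]
  have habs_sum : Summable fun k => ‖δ * g (b * lam k) - (1/2) * ∫ t in I k, ψ t‖ :=
    Summable.of_nonneg_of_le (fun k => norm_nonneg _)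
      (fun k => by rw [Real.norm_eq_abs]; exact huk k) hvsum
  have hNbound : (N:ℝ)*δ ≤ T/2 + 1 := by
    have h20 : (N:ℝ) < T/(2*δ) + 1 := Nat.ceil_lt_add_one (by positivity)
    have h21 : (T/(2*δ))*δ = T/2 := by field_simp
    nlinarith
  have hA : (∑ k ∈ Finset.range N, v k) ≤ ε/2 := by
    have h22 : ∀ k ∈ Finset.range N, v k ≤ δ * ε₃ := fun k _ =>
      mul_le_mul_of_nonneg_left (min_le_left _ _) hδ.le
    have hTne : T + 2 ≠ 0 := by linarith
    calc (∑ k ∈ Finset.range N, v k) ≤ ∑ _k ∈ Finset.range N, δ*ε₃ :=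
          Finset.sum_le_sum h22
      _ = (N:ℝ)*(δ*ε₃) := by rw [Finset.sum_const, Finset.card_range, nsmul_eq_mul]
      _ = ((N:ℝ)*δ)*ε₃ := by ring
      _ ≤ (T/2+1)*ε₃ := mul_le_mul_of_nonneg_right hNbound hε₃.le
      _ = ε/2 := by rw [hε₃def]; field_simp
  have hrNT : Real.exp (-(2*δ)) ^ N ≤ Real.exp (-T) := by
    rw [← hlam_pow N, Real.exp_le_exp]
    have h23 := Nat.le_ceil (T/(2*δ))
    rw [div_le_iff₀ (by positivity)] at h23
    nlinarith
  have hden : δ ≤ 1 - Real.exp (-(2*δ)) := by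
    have h24 := Real.add_one_le_exp (2*δ)
    have h25 : Real.exp (-(2*δ)) ≤ 1/(1+2*δ) := by
      rw [Real.exp_neg, one_div]
      exact inv_anti₀ (by linarith) (by linarith)
    have h26 : 1/(1+2*δ) ≤ 1 - δ := by
      rw [div_le_iff₀ (by positivity)]
      nlinarith
    linarith
  have h29 : 0 < 1 - Real.exp (-(2*δ)) := by linarith
  have hB : (∑' k, v (k+N)) ≤ ε/2 := by
    have h27 : ∀ k : ℕ, v (k+N) ≤ (δ*(2*K*Δ)*Real.exp (-(2*δ))^N) * Real.exp (-(2*δ))^k := by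
      intro k
      calc v (k+N) ≤ δ*(2*K*Δ) * Real.exp (-(2*δ))^(k+N) := hv_le (k+N)
        _ = (δ*(2*K*Δ)*Real.exp (-(2*δ))^N) * Real.exp (-(2*δ))^k := by
            rw [pow_add]; ring
    have h28 : Summable fun k => v (k+N) := (summable_nat_add_iff N).mpr hvsum
    calc (∑' k, v (k+N)) ≤ ∑' k, (δ*(2*K*Δ)*Real.exp (-(2*δ))^N) * Real.exp (-(2*δ))^k :=
          Summable.tsum_le_tsum h27 h28 (hgeo.mul_left _)
      _ = (δ*(2*K*Δ)*Real.exp (-(2*δ))^N) * (1 - Real.exp (-(2*δ)))⁻¹ := by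
          rw [tsum_mul_left, tsum_geometric_of_lt_one hr0.le hr1]
      _ ≤ ε/2 := by
          have h30 : δ * (1 - Real.exp (-(2*δ)))⁻¹ ≤ 1 := by
            have := (div_le_one h29).mpr hden
            rwa [div_eq_mul_inv] at this
          have h31 : (0:ℝ) ≤ 2*K*Δ := by positivity
          have h32 : δ*(2*K*Δ)*Real.exp (-(2*δ))^N * (1 - Real.exp (-(2*δ)))⁻¹
              = (2*K*Δ*Real.exp (-(2*δ))^N) * (δ * (1 - Real.exp (-(2*δ)))⁻¹) := by ring
          rw [h32]
          have hxnn : (0:ℝ) ≤ 2*K*Δ*Real.exp (-(2*δ))^N := by positivity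
          have hynn : (0:ℝ) ≤ δ * (1 - Real.exp (-(2*δ)))⁻¹ :=
            mul_nonneg hδ.le (inv_nonneg.mpr h29.le)
          have h33 : (2*K*Δ*Real.exp (-(2*δ))^N) * (δ * (1 - Real.exp (-(2*δ)))⁻¹)
              ≤ 2*K*Δ*Real.exp (-(2*δ))^N := by nlinarith
          have h34 : 2*K*Δ*Real.exp (-(2*δ))^N ≤ 2*K*Δ*Real.exp (-T) :=
            mul_le_mul_of_nonneg_left hrNT h31
          linarith
  have hfinal : (∑' k, ‖δ * g (b * lam k) - (1/2) * ∫ t in I k, ψ t‖) ≤ ε := by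
    have h35 : (∑' k, ‖δ * g (b * lam k) - (1/2) * ∫ t in I k, ψ t‖) ≤ ∑' k, v k :=
      Summable.tsum_le_tsum (fun k => by rw [Real.norm_eq_abs]; exact huk k) habs_sum hvsum
    have h36 : (∑' k, v k) = ∑ k ∈ Finset.range N, v k + ∑' k, v (k+N) :=
      (Summable.sum_add_tsum_nat_add N hvsum).symm
    linarith
  show |δ * (∑' k, g (b * lam k)) - (1/2) * ∫ t in Ioi (0:ℝ), ψ t| ≤ ε
  calc |δ * (∑' k, g (b * lam k)) - (1/2) * ∫ t in Ioi (0:ℝ), ψ t|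
      = |∑' k, (δ * g (b * lam k) - (1/2) * ∫ t in I k, ψ t)| := by rw [hdiff]
    _ ≤ ∑' k, ‖δ * g (b * lam k) - (1/2) * ∫ t in I k, ψ t‖ := by
        rw [← Real.norm_eq_abs]
        exact norm_tsum_le_tsum_norm habs_sum
    _ ≤ ε := hfinal

private lemma szego_ratio_tendsto :
    Tendsto (fun δ : ℝ => δ / Real.tanh δ) (nhdsWithin 0 (Set.Ioi 0)) (nhds 1) := by
  have hsinh : Tendsto (fun δ : ℝ => Real.sinh δ / δ) (nhdsWithin 0 (Set.Ioi 0)) (nhds 1) := by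
    have h := Real.hasDerivAt_sinh 0
    rw [hasDerivAt_iff_tendsto_slope, Real.cosh_zero] at h
    have h2 := h.mono_left (nhdsWithin_mono 0 (fun x (hx : x ∈ Ioi (0:ℝ)) => ne_of_gt hx))
    refine h2.congr fun x => ?_
    rw [slope_def_field, Real.sinh_zero, sub_zero, sub_zero]
  have hcosh : Tendsto (fun δ : ℝ => (Real.cosh δ)⁻¹) (nhdsWithin 0 (Set.Ioi 0)) (nhds 1) := by
    have hc : Continuous fun δ : ℝ => (Real.cosh δ)⁻¹ :=
      Real.continuous_cosh.inv₀ (fun x => (Real.cosh_pos x).ne')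
    have := hc.tendsto 0
    rw [Real.cosh_zero, inv_one] at this
    exact this.mono_left nhdsWithin_le_nhds
  have htanh : Tendsto (fun δ : ℝ => Real.tanh δ / δ) (nhdsWithin 0 (Set.Ioi 0)) (nhds 1) := by
    have := hsinh.mul hcosh
    rw [mul_one] at this
    refine this.congr fun δ => ?_
    rw [Real.tanh_eq_sinh_div_cosh]
    ring
  have h3 := htanh.inv₀ one_ne_zero
  rw [inv_one] at h3
  refine h3.congr fun δ => ?_
  rw [inv_div]


set_option maxHeartbeats 1000000 in
/-- Theorem 5 of the paper (the Szegő theorem of Appendix B): for `G(x,z) = a(x)·g(b(x)·z)`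
with `g : [0,Δ] → ℝ` continuous such that `lim_{x→0+} g(x)/x` exists, `a` bounded and
`b(δ) ∈ [0,Δ]`, the eigenvalue sum of the time–frequency localization operator is
asymptotically its Weyl-symbol integral:
`δ·[Σ_k a(δ)·g(b(δ)·e^{−(2k+1)δ}) − (1/(2π))·∬ a(δ)·g(b(δ)·σ_δ^{(γ(δ))}(x,ξ)) dx dξ] → 0`
as `δ → 0+`, where `σ_δ^{(γ)}(x,ξ) = (1/cosh δ)·exp(−tanh δ·(γ⁻²x² + γ²ξ²))`. -/
theorem szego_theorem
    (Δ : ℝ) (hΔ : 0 < Δ)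
    (g : ℝ → ℝ) (hg : ContinuousOn g (Set.Icc 0 Δ))
    (hg0 : ∃ L : ℝ, Filter.Tendsto (fun x : ℝ => g x / x) (nhdsWithin 0 (Set.Ioi 0)) (nhds L))
    (a b γ : ℝ → ℝ)
    (ha : ∃ M : ℝ, ∀ δ > 0, |a δ| ≤ M)
    (hb : ∀ δ > 0, b δ ∈ Set.Icc 0 Δ)
    (hγ : ∀ δ > 0, 0 < γ δ) :
    Filter.Tendsto
      (fun δ : ℝ =>
        δ * ((∑' k : ℕ, a δ * g (b δ * Real.exp (-((2 * (k : ℝ) + 1) * δ)))) -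
          (1 / (2 * π)) * ∫ p : ℝ × ℝ,
            a δ * g (b δ * ((Real.cosh δ)⁻¹ *
              Real.exp (-(Real.tanh δ) * ((γ δ)⁻¹ ^ 2 * p.1 ^ 2 + (γ δ) ^ 2 * p.2 ^ 2))))))
      (nhdsWithin 0 (Set.Ioi 0)) (nhds 0) := by
  obtain ⟨L, hL⟩ := hg0
  obtain ⟨K, hK, hKb⟩ := szego_linear_bound hΔ hg hL
  obtain ⟨M₀, hM₀⟩ := ha
  set M1 : ℝ := max M₀ 0 + 1 with hM1def
  have hM1 : 1 ≤ M1 := by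
    have := le_max_right M₀ 0; rw [hM1def]; linarith
  have hM : ∀ δ > 0, |a δ| ≤ M1 := fun δ hδ =>
    (hM₀ δ hδ).trans (by rw [hM1def]; have := le_max_left M₀ 0; linarith)
  rw [NormedAddCommGroup.tendsto_nhds_zero]
  intro ε hε
  set ε' : ℝ := ε / (3 * M1) with hε'def
  have hε' : 0 < ε' := by rw [hε'def]; positivity
  obtain ⟨δ₁, hδ₁, hsum⟩ := szego_sum_side hΔ hK hg hKb hε'
  set εr : ℝ := min 1 (ε' / (K * Δ)) with hεrdef
  have hεr : 0 < εr := lt_min one_pos (by positivity)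
  have hratio := Metric.tendsto_nhds.mp szego_ratio_tendsto εr hεr
  have hmem1 : Set.Ioo (0:ℝ) (min δ₁ (ε' / (K * Δ))) ∈ nhdsWithin (0:ℝ) (Set.Ioi 0) :=
    Ioo_mem_nhdsGT_of_mem ⟨le_rfl, lt_min hδ₁ (by positivity)⟩
  filter_upwards [hratio, hmem1, self_mem_nhdsWithin] with δ hδr hδmem hδpos
  simp only [Set.mem_Ioi] at hδpos
  obtain ⟨_, hδlt⟩ := hδmem
  have hδδ₁ : δ < δ₁ := lt_of_lt_of_le hδlt (min_le_left _ _)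
  have hδE : δ < ε' / (K * Δ) := lt_of_lt_of_le hδlt (min_le_right _ _)
  have hb' := hb δ hδpos
  have hγ' := hγ δ hδpos
  obtain ⟨hb0, hbΔ⟩ := hb'
  -- notation
  set c : ℝ := Real.tanh δ with hcdef
  have hc : 0 < c := szego_tanh_pos hδpos
  set m : ℝ := Real.log (Real.cosh δ) with hmdef
  have hm0 : 0 ≤ m := Real.log_nonneg (Real.one_le_cosh δ)
  have hmδ : m ≤ δ := by
    rw [hmdef, Real.log_le_iff_le_exp (Real.cosh_pos δ), Real.cosh_eq]
    have h1 : Real.exp (-δ) ≤ Real.exp δ := by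
      rw [Real.exp_le_exp]; linarith
    linarith
  set ψ : ℝ → ℝ := fun t => g (b δ * Real.exp (-t)) with hψdef
  set S : ℝ := ∑' k : ℕ, g (b δ * Real.exp (-((2 * (k:ℝ) + 1) * δ))) with hSdef
  set J : ℝ := ∫ t in Set.Ioi (0:ℝ), ψ t with hJdef
  set Jm : ℝ := ∫ t in Set.Ioi m, ψ t with hJmdef
  set E : ℝ := ∫ t in Set.Ioc (0:ℝ) m, ψ t with hEdef
  have hJint : IntegrableOn ψ (Set.Ioi 0) :=
    szego_integrableOn_Ioi hK hg hKb ⟨hb0, hbΔ⟩ le_rfl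
  have hJmint : IntegrableOn ψ (Set.Ioi m) :=
    szego_integrableOn_Ioi hK hg hKb ⟨hb0, hbΔ⟩ hm0
  have hEint : IntegrableOn ψ (Set.Ioc 0 m) :=
    hJint.mono_set (fun x hx => hx.1)
  have hJsplit : J = E + Jm := by
    rw [hJdef, hEdef, hJmdef, ← setIntegral_union (Ioc_disjoint_Ioi le_rfl)
      measurableSet_Ioi hEint hJmint, Ioc_union_Ioi_eq_Ioi hm0]
  -- bounds
  have hψbound : ∀ t : ℝ, 0 < t → |ψ t| ≤ K * Δ * Real.exp (-t) := by
    intro t ht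
    have hmemt : b δ * Real.exp (-t) ∈ Set.Icc 0 Δ := by
      have h1 : Real.exp (-t) ≤ 1 := by rw [Real.exp_le_one_iff]; linarith
      constructor
      · positivity
      · nlinarith [Real.exp_pos (-t)]
    have hstep : K * (b δ * Real.exp (-t)) ≤ K * Δ * Real.exp (-t) := by
      have h9 := mul_le_mul_of_nonneg_right hbΔ (Real.exp_pos (-t)).le
      nlinarith
    calc |ψ t| ≤ K * (b δ * Real.exp (-t)) := hKb _ hmemt
      _ ≤ K * Δ * Real.exp (-t) := hstep
  have hJm_bound : |Jm| ≤ K * Δ := by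
    rw [hJmdef, ← Real.norm_eq_abs]
    calc ‖∫ t in Set.Ioi m, ψ t‖ ≤ ∫ t in Set.Ioi m, ‖ψ t‖ := norm_integral_le_integral_norm _
      _ ≤ ∫ t in Set.Ioi m, K * Δ * Real.exp (-1 * t) := by
          apply setIntegral_mono_on hJmint.norm
            ((exp_neg_integrableOn_Ioi m one_pos).const_mul (K*Δ)) measurableSet_Ioi
          intro t ht
          rw [Real.norm_eq_abs, neg_one_mul]
          exact hψbound t (lt_of_le_of_lt hm0 ht)
      _ = K * Δ * Real.exp (-m) := by
          simp only [neg_one_mul]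
          rw [integral_const_mul, integral_exp_neg_Ioi]
      _ ≤ K * Δ := by
          have h4 := mul_le_mul_of_nonneg_left
            (Real.exp_le_one_iff.mpr (neg_nonpos.mpr hm0))
            (show (0:ℝ) ≤ K * Δ by positivity)
          linarith
  have hE_bound : |E| ≤ K * Δ * m := by
    rw [hEdef, ← Real.norm_eq_abs]
    have hvolfin : volume (Set.Ioc (0:ℝ) m) < ⊤ := by
      rw [Real.volume_Ioc]; exact ENNReal.ofReal_lt_top
    have := norm_setIntegral_le_of_norm_le_const (C := K * Δ) hvolfin
      (fun t ht => by
        rw [Real.norm_eq_abs]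
        have h2 := hψbound t ht.1
        have h3 : Real.exp (-t) ≤ 1 := by rw [Real.exp_le_one_iff]; linarith [ht.1]
        have h4 := mul_le_mul_of_nonneg_left h3 (show (0:ℝ) ≤ K * Δ by positivity)
        linarith)
    calc ‖∫ t in Set.Ioc (0:ℝ) m, ψ t‖ ≤ K * Δ * (volume (Set.Ioc (0:ℝ) m)).toReal := this
      _ = K * Δ * m := by
          rw [Real.volume_Ioc, ENNReal.toReal_ofReal (by linarith), sub_zero]
  -- sum comparison
  have hsumδ := hsum δ hδpos hδδ₁ (b δ) ⟨hb0, hbΔ⟩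
  -- integral identity
  have hD := szego_integral_eq hΔ hK hg hKb ⟨hb0, hbΔ⟩ hδpos hγ'
  -- algebraic reduction of the goal
  have hEq1 : (∑' k : ℕ, a δ * g (b δ * Real.exp (-((2 * (k:ℝ) + 1) * δ)))) = a δ * S :=
    tsum_mul_left
  have hEq2 : (∫ p : ℝ × ℝ, a δ * g (b δ * ((Real.cosh δ)⁻¹ *
        Real.exp (-(Real.tanh δ) * ((γ δ)⁻¹ ^ 2 * p.1 ^ 2 + (γ δ) ^ 2 * p.2 ^ 2)))))
      = a δ * ((π / c) * Jm) := by
    rw [integral_const_mul, hD]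
  rw [hEq1, hEq2]
  -- main estimate
  have hπ : (0:ℝ) < π := Real.pi_pos
  have hmain : δ * (a δ * S - 1 / (2*π) * (a δ * ((π / c) * Jm)))
      = a δ * (δ * S - (δ / (2 * c)) * Jm) := by
    field_simp
  rw [hmain]
  -- |δ/c - 1| < εr
  have hδc : |δ / c - 1| < εr := by
    have := hδr
    rw [Real.dist_eq] at this
    exact this
  have hεr1 : εr ≤ 1 := min_le_left _ _
  have hεr2 : εr ≤ ε' / (K * Δ) := min_le_right _ _
  have hX : |δ * S - (δ / (2 * c)) * Jm| ≤ 2 * ε' := by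
    have h1 : |δ * S - (1/2) * J| ≤ ε' := hsumδ
    have h2 : (1/2) * J - (δ / (2 * c)) * Jm = E/2 + (1 - δ/c) * (Jm/2) := by
      rw [hJsplit]; field_simp; ring
    have h3 : |(1/2) * J - (δ / (2 * c)) * Jm| ≤ ε'/2 + ε'/2 := by
      rw [h2]
      have h4 : |E/2| ≤ ε'/2 := by
        rw [abs_div, abs_of_nonneg (by norm_num : (0:ℝ) ≤ 2)]
        have h5 : K * Δ * m ≤ K * Δ * δ :=
          mul_le_mul_of_nonneg_left hmδ (by positivity)
        have h6 : K * Δ * δ ≤ ε' := by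
          have h7 := (lt_div_iff₀ (by positivity : (0:ℝ) < K * Δ)).mp hδE
          nlinarith
        linarith [hE_bound]
      have h7 : |(1 - δ/c) * (Jm/2)| ≤ ε'/2 := by
        rw [abs_mul]
        have h8 : |1 - δ/c| < εr := by rw [abs_sub_comm]; exact hδc
        have h9 : |Jm/2| ≤ K*Δ/2 := by
          rw [abs_div, abs_of_nonneg (by norm_num : (0:ℝ) ≤ 2)]
          linarith [hJm_bound]
        have hKΔne : (K*Δ) ≠ 0 := by positivity
        calc |1 - δ/c| * |Jm/2| ≤ εr * (K*Δ/2) :=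
              mul_le_mul h8.le h9 (abs_nonneg _) hεr.le
          _ ≤ (ε'/(K*Δ)) * (K*Δ/2) := mul_le_mul_of_nonneg_right hεr2 (by positivity)
          _ = ε'/2 := by field_simp
      calc |E/2 + (1 - δ/c) * (Jm/2)| ≤ |E/2| + |(1 - δ/c) * (Jm/2)| := abs_add_le _ _
        _ ≤ ε'/2 + ε'/2 := add_le_add h4 h7
    calc |δ * S - (δ / (2 * c)) * Jm|
        ≤ |δ * S - (1/2) * J| + |(1/2) * J - (δ / (2 * c)) * Jm| := abs_sub_le _ _ _
      _ ≤ 2 * ε' := by linarith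
  calc ‖a δ * (δ * S - (δ / (2 * c)) * Jm)‖
      = |a δ| * |δ * S - (δ / (2 * c)) * Jm| := by rw [Real.norm_eq_abs, abs_mul]
    _ ≤ M1 * (2 * ε') := by
        have := hM δ hδpos
        nlinarith [abs_nonneg (a δ), abs_nonneg (δ * S - (δ / (2 * c)) * Jm)]
    _ < ε := by
        have hM1pos : (0:ℝ) < M1 := by linarith
        have heq : M1 * (2 * ε') = 2/3 * ε := by
          rw [hε'def]; field_simp
        rw [heq]; linarith
end

section
/- Let γ > 0 and δ > 0, and set α = γ·√(coth δ) and β = γ⁻¹·√(coth δ). Then for every k ∈ ℕ₀ and every t ∈ ℝ, e^{−t²/(2α²)}·(β/√(2π cosh δ))·∫_ℝ exp(−(β²/2)·(t/cosh δ − t′)²)·(D_γψ_k)(t′) dt′ = e^{−(k+1/2)δ}·(D_γψ_k)(t). In other words, the dilated Hermite functions D_γψ_k are eigenfunctions of the time–frequency localization operator P_δ^{(γ)} with eigenvalues e^{−(k+1/2)δ}. -/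
open Real MeasureTheory

/-- The `k`-th physicists' Hermite polynomial as a function:
`H_k(t) = e^{t²}·(−d/dt)^k (e^{−t²})`. -/
noncomputable def physHermite (k : ℕ) (t : ℝ) : ℝ :=
  Real.exp (t ^ 2) * ((-1 : ℝ) ^ k * iteratedDeriv k (fun s : ℝ => Real.exp (-(s ^ 2))) t)

/-- The `k`-th Hermite function `ψ_k(t) = (2^k k! √π)^{−1/2} H_k(t) e^{−t²/2}`. -/
noncomputable def hermiteFun (k : ℕ) (t : ℝ) : ℝ :=
  ((2 : ℝ) ^ k * (Nat.factorial k : ℝ) * Real.sqrt π) ^ (-(1 / 2 : ℝ)) *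
    physHermite k t * Real.exp (-(t ^ 2) / 2)

/-- The `L²`-normalized dilation `(D_γψ_k)(t) = γ^{−1/2} ψ_k(t/γ)`. -/
noncomputable def dilHermite (γ : ℝ) (k : ℕ) (t : ℝ) : ℝ :=
  γ ^ (-(1 / 2 : ℝ)) * hermiteFun k (t / γ)

open Polynomial Filter Topology

/-- physicists' Hermite polynomials -/
noncomputable def physH : ℕ → Polynomial ℝ
  | 0 => 1
  | (k+1) => C 2 * X * physH k - derivative (physH k)

lemma physH_zero : physH 0 = 1 := rfl

lemma physH_succ (k : ℕ) : physH (k+1) = C 2 * X * physH k - derivative (physH k) := rfl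

lemma derivative_physH (k : ℕ) :
    derivative (physH (k+1)) = C (2 * ((k : ℝ) + 1)) * physH k := by
  induction k with
  | zero =>
    rw [physH_succ, physH_zero]
    norm_num
  | succ n ih =>
    have hD : derivative (physH n) = C 2 * X * physH n - physH (n+1) := by
      rw [physH_succ n]; ring
    have hc : C ((2:ℝ) * (↑(n+1) + 1)) = C 2 + C (2 * ((n:ℝ) + 1)) := by
      rw [← C_add]; push_cast; ring_nf
    rw [physH_succ (n+1), derivative_sub, derivative_mul, derivative_mul, derivative_X,
      derivative_C, ih, derivative_C_mul, hD, hc]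
    ring

lemma iteratedDeriv_gauss (k : ℕ) (t : ℝ) :
    iteratedDeriv k (fun s : ℝ => Real.exp (-(s ^ 2))) t =
      (-1 : ℝ) ^ k * aeval t (physH k) * Real.exp (-(t ^ 2)) := by
  induction k generalizing t with
  | zero => simp [physH_zero]
  | succ n ih =>
    have hd : ∀ x : ℝ, HasDerivAt (fun s : ℝ => Real.exp (-(s ^ 2))) (-(2*x) * Real.exp (-(x^2))) x := by
      intro x
      have h1 : HasDerivAt (fun s : ℝ => -(s ^ 2)) (-(2*x)) x := by
        simpa using ((hasDerivAt_pow 2 x).fun_neg)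
      simpa [mul_comm] using h1.exp
    rw [iteratedDeriv_succ]
    have heq : deriv (iteratedDeriv n (fun s : ℝ => Real.exp (-(s ^ 2)))) t
        = deriv (fun x => (-1 : ℝ) ^ n * aeval x (physH n) * Real.exp (-(x ^ 2))) t := by
      apply Filter.EventuallyEq.deriv_eq
      filter_upwards with x using ih x
    rw [heq]
    have hP : HasDerivAt (fun x : ℝ => (-1 : ℝ) ^ n * aeval x (physH n) * Real.exp (-(x ^ 2)))
        ((-1:ℝ)^(n+1) * aeval t (physH (n+1)) * Real.exp (-(t^2))) t := by
      have h1 : HasDerivAt (fun x : ℝ => aeval x (physH n)) (aeval t (derivative (physH n))) t := by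
        simpa using (physH n).hasDerivAt t
      have h2 := (h1.const_mul ((-1:ℝ)^n)).fun_mul (hd t)
      refine h2.congr_deriv ?_
      simp only [physH_succ, pow_succ, map_sub, map_mul, aeval_X, aeval_C, algebraMap_eq, Algebra.algebraMap_self_apply, eval_C]
      norm_num
      ring
    exact hP.deriv

theorem physHermite_eq_aeval (k : ℕ) (t : ℝ) :
    physHermite k t = aeval t (physH k) := by
  unfold physHermite
  rw [iteratedDeriv_gauss]
  rw [show (-1:ℝ)^k * ((-1:ℝ)^k * aeval t (physH k) * Real.exp (-(t^2))) =
    ((-1:ℝ)^k)^2 * aeval t (physH k) * Real.exp (-(t^2)) by ring]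
  rw [← pow_mul, mul_comm k 2, pow_mul]
  norm_num
  rw [show Real.exp (t^2) * (eval t (physH k) * Real.exp (-(t^2))) =
    eval t (physH k) * (Real.exp (t^2) * Real.exp (-(t^2))) by ring, ← Real.exp_add]
  simp


lemma gauss_poly_bound {b : ℝ} (hb : 0 < b) (P : Polynomial ℝ) :
    ∃ C : ℝ, ∀ y : ℝ, |aeval y P| * Real.exp (-(b * y ^ 2)) ≤ C * Real.exp (-(b/2 * y ^ 2)) := by
  induction P using Polynomial.induction_on' with
  | add p q hp hq =>
    obtain ⟨C1, h1⟩ := hp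
    obtain ⟨C2, h2⟩ := hq
    refine ⟨C1 + C2, fun y => ?_⟩
    have := abs_add_le (aeval y p) (aeval y q)
    have e1 := h1 y; have e2 := h2 y
    have hE : 0 ≤ Real.exp (-(b * y ^ 2)) := (Real.exp_pos _).le
    simp only [map_add]
    nlinarith [abs_nonneg (aeval y p), abs_nonneg (aeval y q)]
  | monomial n c =>
    refine ⟨|c| * (Nat.factorial n) * Real.exp (1/(2*b)), fun y => ?_⟩
    have h1 : |aeval y (monomial n c)| = |c| * |y| ^ n := by
      simp [aeval_monomial, abs_mul, abs_pow]
    have h2 : |y| ^ n ≤ (Nat.factorial n) * Real.exp |y| := by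
      have h := Real.pow_div_factorial_le_exp |y| (abs_nonneg y) n
      rw [div_le_iff₀ (by positivity)] at h
      linarith [h]
    have h3 : Real.exp |y| * Real.exp (-(b * y ^ 2)) ≤
        Real.exp (1/(2*b)) * Real.exp (-(b/2 * y ^ 2)) := by
      rw [← Real.exp_add, ← Real.exp_add]
      apply Real.exp_le_exp.2
      have h4 : 2*b*|y| ≤ b^2*y^2 + 1 := by nlinarith [sq_nonneg (b*|y| - 1), sq_abs y]
      have h5 : |y| ≤ (b^2*y^2+1)/(2*b) := by rw [le_div_iff₀ (by positivity)]; linarith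
      have h6 : (b^2*y^2+1)/(2*b) = b/2*y^2 + 1/(2*b) := by field_simp
      linarith
    have hE : 0 ≤ Real.exp (-(b * y ^ 2)) := (Real.exp_pos _).le
    calc |aeval y (monomial n c)| * Real.exp (-(b * y ^ 2))
        = |c| * (|y| ^ n * Real.exp (-(b * y ^ 2))) := by rw [h1]; ring
      _ ≤ |c| * ((Nat.factorial n) * Real.exp |y| * Real.exp (-(b * y ^ 2))) := by
          have : |y| ^ n * Real.exp (-(b * y ^ 2)) ≤
              (Nat.factorial n) * Real.exp |y| * Real.exp (-(b * y ^ 2)) :=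
            mul_le_mul_of_nonneg_right h2 hE
          exact mul_le_mul_of_nonneg_left this (abs_nonneg c)
      _ ≤ |c| * ((Nat.factorial n) * (Real.exp (1/(2*b)) * Real.exp (-(b/2 * y ^ 2)))) := by
          have := mul_le_mul_of_nonneg_left h3 (le_of_lt (by positivity :
            (0:ℝ) < (Nat.factorial n)))
          have := mul_le_mul_of_nonneg_left this (abs_nonneg c)
          calc |c| * ((Nat.factorial n) * Real.exp |y| * Real.exp (-(b * y ^ 2)))
              = |c| * ((Nat.factorial n) * (Real.exp |y| * Real.exp (-(b * y ^ 2)))) := by ring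
            _ ≤ _ := this
      _ = |c| * (Nat.factorial n) * Real.exp (1/(2*b)) * Real.exp (-(b/2 * y ^ 2)) := by ring

lemma integrable_gauss_poly0 {b : ℝ} (hb : 0 < b) (P : Polynomial ℝ) :
    Integrable (fun y : ℝ => Real.exp (-(b * y ^ 2)) * aeval y P) := by
  obtain ⟨C, hC⟩ := gauss_poly_bound hb P
  apply Integrable.mono' (((integrable_exp_neg_mul_sq (half_pos hb)).const_mul C))
  · exact ((Real.continuous_exp.comp (by continuity)).mul (P.continuous_aeval)).aestronglyMeasurable
  · filter_upwards with y
    have := hC y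
    rw [Real.norm_eq_abs, abs_mul, abs_of_nonneg (Real.exp_pos _).le]
    calc Real.exp (-(b * y ^ 2)) * |aeval y P| = |aeval y P| * Real.exp (-(b * y ^ 2)) := by ring
      _ ≤ C * Real.exp (-(b/2 * y ^ 2)) := this
      _ = C * Real.exp (-(b/2) * y ^ 2) := by ring_nf

lemma integrable_gauss_poly {b : ℝ} (hb : 0 < b) (m : ℝ) (P : Polynomial ℝ) :
    Integrable (fun y : ℝ => Real.exp (-(b * (y - m) ^ 2)) * aeval y P) := by
  have h := (integrable_gauss_poly0 hb (P.comp (X + C m))).comp_sub_right m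
  have : (fun y : ℝ => Real.exp (-(b * (y - m) ^ 2)) * aeval (y - m) (P.comp (X + C m)))
      = fun y : ℝ => Real.exp (-(b * (y - m) ^ 2)) * aeval y P := by
    funext y; simp [aeval_comp]
  simpa [this] using h

lemma tendsto_gauss_poly0 {b : ℝ} (hb : 0 < b) (P : Polynomial ℝ) {l : Filter ℝ}
    (hl : Tendsto (fun y : ℝ => |y|) l atTop) :
    Tendsto (fun y : ℝ => Real.exp (-(b * y ^ 2)) * aeval y P) l (𝓝 0) := by
  obtain ⟨C, hC⟩ := gauss_poly_bound hb P
  have hbd : ∀ y : ℝ, ‖Real.exp (-(b * y ^ 2)) * aeval y P‖ ≤ C * Real.exp (-(b/2 * y ^ 2)) := by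
    intro y
    have := hC y
    rw [Real.norm_eq_abs, abs_mul, abs_of_nonneg (Real.exp_pos _).le]
    calc Real.exp (-(b * y ^ 2)) * |aeval y P| = |aeval y P| * Real.exp (-(b * y ^ 2)) := by ring
      _ ≤ C * Real.exp (-(b/2 * y ^ 2)) := this
  apply squeeze_zero_norm hbd
  · have h1 : Tendsto (fun y : ℝ => -(b/2 * y ^ 2)) l atBot := by
      apply Filter.tendsto_neg_atTop_atBot.comp
      have h2 : Tendsto (fun y : ℝ => y ^ 2) l atTop := by
        have : Tendsto (fun y : ℝ => |y| ^ 2) l atTop :=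
          (tendsto_pow_atTop (two_ne_zero)).comp hl
        simpa [sq_abs] using this
      exact h2.const_mul_atTop (half_pos hb)
    have := (Real.tendsto_exp_atBot.comp h1).const_mul C
    simpa using this


lemma tendsto_gauss_poly_top {b : ℝ} (hb : 0 < b) (m : ℝ) (P : Polynomial ℝ) :
    Tendsto (fun y : ℝ => Real.exp (-(b * (y - m) ^ 2)) * aeval y P) atTop (𝓝 0) := by
  have h0 := tendsto_gauss_poly0 hb (P.comp (X + C m))
    (l := atTop) (tendsto_abs_atTop_atTop)
  have hc : Tendsto (fun y : ℝ => y - m) atTop atTop := tendsto_atTop_add_const_right _ (-m) tendsto_id |>.congr (by intro x; simp only [id_eq]; ring)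
  have := h0.comp hc
  refine this.congr fun y => ?_
  simp [Function.comp, aeval_comp]

lemma tendsto_gauss_poly_bot {b : ℝ} (hb : 0 < b) (m : ℝ) (P : Polynomial ℝ) :
    Tendsto (fun y : ℝ => Real.exp (-(b * (y - m) ^ 2)) * aeval y P) atBot (𝓝 0) := by
  have h0 := tendsto_gauss_poly0 hb (P.comp (X + C m))
    (l := atBot) (tendsto_abs_atBot_atTop)
  have hc : Tendsto (fun y : ℝ => y - m) atBot atBot := tendsto_atBot_add_const_right _ (-m) tendsto_id |>.congr (by intro x; simp only [id_eq]; ring)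
  have := h0.comp hc
  refine this.congr fun y => ?_
  simp [Function.comp, aeval_comp]

lemma hasDerivAt_gauss_poly {b : ℝ} (m : ℝ) (P : Polynomial ℝ) (y : ℝ) :
    HasDerivAt (fun y : ℝ => Real.exp (-(b * (y - m) ^ 2)) * aeval y P)
      (Real.exp (-(b * (y - m) ^ 2)) *
        aeval y (derivative P - C (2*b) * (X - C m) * P)) y := by
  have h1 : HasDerivAt (fun y : ℝ => -(b * (y - m) ^ 2)) (-(b * (2 * (y - m)))) y := by
    have := (((hasDerivAt_id y).sub_const m).pow 2).const_mul b
    simpa using this.fun_neg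
  have h2 := h1.exp
  have h3 : HasDerivAt (fun y : ℝ => aeval y P) (aeval y (derivative P)) y := by
    simpa using P.hasDerivAt y
  have := h2.fun_mul h3
  refine this.congr_deriv ?_
  simp only [map_sub, map_mul, aeval_X, aeval_C, algebraMap_eq, Algebra.algebraMap_self_apply, eval_C]
  ring_nf

lemma integral_deriv_gauss_poly {b : ℝ} (hb : 0 < b) (m : ℝ) (P : Polynomial ℝ) :
    ∫ y : ℝ, Real.exp (-(b * (y - m) ^ 2)) *
      aeval y (derivative P - C (2*b) * (X - C m) * P) = 0 := by
  set g' : ℝ → ℝ := fun y => Real.exp (-(b * (y - m) ^ 2)) *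
      aeval y (derivative P - C (2*b) * (X - C m) * P) with hg'
  have hint : Integrable g' := integrable_gauss_poly hb m _
  have hIoi := integral_Ioi_of_hasDerivAt_of_tendsto' (a := 0)
    (fun x _ => hasDerivAt_gauss_poly m P x) hint.integrableOn (tendsto_gauss_poly_top hb m P)
  have hIic := integral_Iic_of_hasDerivAt_of_tendsto' (a := 0)
    (fun x _ => hasDerivAt_gauss_poly m P x) hint.integrableOn (tendsto_gauss_poly_bot hb m P)
  have hsplit := integral_add_compl (measurableSet_Iic (a := (0:ℝ))) hint
  rw [Set.compl_Iic] at hsplit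
  rw [← hsplit, hIic, hIoi]
  ring

lemma integral_gauss_center {b : ℝ} (hb : 0 < b) (m : ℝ) :
    ∫ y : ℝ, Real.exp (-(b * (y - m) ^ 2)) = Real.sqrt (π / b) := by
  have := integral_sub_right_eq_self (μ := volume) (fun y : ℝ => Real.exp (-b * y ^ 2)) m
  rw [show (fun y : ℝ => Real.exp (-(b * (y - m) ^ 2))) = fun y : ℝ => Real.exp (-b * (y - m) ^ 2)
    from funext fun y => by ring_nf] at *
  rw [this, integral_gaussian]
lemma key_integral {τ : ℝ} (hτ : 0 < τ) (hτ1 : τ < 1) (k : ℕ) :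
    ∀ m : ℝ, ∫ y : ℝ, Real.exp (-(τ⁻¹ * (y - m) ^ 2)) * aeval y (physH k)
      = Real.sqrt (π * τ) * Real.sqrt (1 - τ) ^ k * aeval (m / Real.sqrt (1 - τ)) (physH k) := by
  have hb : 0 < τ⁻¹ := inv_pos.2 hτ
  have hσ : 0 < Real.sqrt (1 - τ) := Real.sqrt_pos.2 (by linarith)
  have hσ2 : Real.sqrt (1 - τ) ^ 2 = 1 - τ := Real.sq_sqrt (by linarith)
  induction k using Nat.twoStepInduction with
  | zero =>
    intro m
    simp only [physH_zero, map_one, mul_one, pow_zero]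
    rw [integral_gauss_center hb m]
    congr 1
    field_simp
  | one =>
    intro m
    have hparts := integral_deriv_gauss_poly hb m (1 : Polynomial ℝ)
    have hcenter := integral_gauss_center hb m
    have hpt : ∀ y : ℝ, Real.exp (-(τ⁻¹ * (y - m) ^ 2)) * aeval y (physH 1)
        = (-τ) * (Real.exp (-(τ⁻¹ * (y - m) ^ 2)) *
            aeval y (derivative (1 : Polynomial ℝ) - C (2*τ⁻¹) * (X - C m) * 1)) +
          (2*m) * (Real.exp (-(τ⁻¹ * (y - m) ^ 2)) * aeval y (1 : Polynomial ℝ)) := by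
      intro y
      have h1 : aeval y (physH 1) = 2 * y := by
        rw [physH_succ, physH_zero]; simp
      rw [h1]
      simp only [derivative_one, map_sub, map_mul, map_one, aeval_X, aeval_C, algebraMap_eq, Algebra.algebraMap_self_apply,
        eval_C, zero_sub, map_neg, mul_one]
      field_simp
      ring
    simp only [hpt]
    have int1 : Integrable (fun y : ℝ => (-τ) * (Real.exp (-(τ⁻¹ * (y - m) ^ 2)) *
        aeval y (derivative (1 : Polynomial ℝ) - C (2*τ⁻¹) * (X - C m) * 1))) :=
      (integrable_gauss_poly hb m _).const_mul _
    have int2 : Integrable (fun y : ℝ => (2*m) * (Real.exp (-(τ⁻¹ * (y - m) ^ 2)) *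
        aeval y (1 : Polynomial ℝ))) :=
      (integrable_gauss_poly hb m _).const_mul _
    rw [integral_add int1 int2, integral_const_mul, integral_const_mul, hparts]
    have hcen' : ∫ y : ℝ, Real.exp (-(τ⁻¹ * (y - m) ^ 2)) * aeval y (1 : Polynomial ℝ)
        = Real.sqrt (π * τ) := by
      simp only [map_one, mul_one]
      rw [integral_gauss_center hb m]
      congr 1
      field_simp
    rw [hcen']
    have h1 : aeval (m / Real.sqrt (1 - τ)) (physH 1) = 2 * (m / Real.sqrt (1 - τ)) := by
      rw [physH_succ, physH_zero]; simp
    rw [h1]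
    field_simp
    ring
  | more n ih1 ih2 =>
    intro m
    have hparts := integral_deriv_gauss_poly hb m (physH (n+1))
    have hpt : ∀ y : ℝ, Real.exp (-(τ⁻¹ * (y - m) ^ 2)) * aeval y (physH (n+2))
        = (-τ) * (Real.exp (-(τ⁻¹ * (y - m) ^ 2)) *
            aeval y (derivative (physH (n+1)) - C (2*τ⁻¹) * (X - C m) * physH (n+1)))
          + (2*m) * (Real.exp (-(τ⁻¹ * (y - m) ^ 2)) * aeval y (physH (n+1)))
          + (2*((n:ℝ)+1)*(τ-1)) * (Real.exp (-(τ⁻¹ * (y - m) ^ 2)) * aeval y (physH n)) := by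
      intro y
      have hder : aeval y (derivative (physH (n+1))) = 2*((n:ℝ)+1) * aeval y (physH n) := by
        rw [derivative_physH]; simp
      have hrec : aeval y (physH (n+2)) =
          2*y*aeval y (physH (n+1)) - 2*((n:ℝ)+1)*aeval y (physH n) := by
        rw [physH_succ (n+1), derivative_physH]
        simp only [map_sub, map_mul, aeval_X, aeval_C, algebraMap_eq, Algebra.algebraMap_self_apply, eval_C]
      rw [hrec]
      simp only [map_sub, map_mul, aeval_X, aeval_C, algebraMap_eq, Algebra.algebraMap_self_apply, eval_C, hder]
      field_simp
      ring
    simp only [hpt]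
    have int1 : Integrable (fun y : ℝ => (-τ) * (Real.exp (-(τ⁻¹ * (y - m) ^ 2)) *
        aeval y (derivative (physH (n+1)) - C (2*τ⁻¹) * (X - C m) * physH (n+1)))) :=
      (integrable_gauss_poly hb m _).const_mul _
    have int2 : Integrable (fun y : ℝ => (2*m) * (Real.exp (-(τ⁻¹ * (y - m) ^ 2)) *
        aeval y (physH (n+1)))) :=
      (integrable_gauss_poly hb m _).const_mul _
    have int3 : Integrable (fun y : ℝ => (2*((n:ℝ)+1)*(τ-1)) * (Real.exp (-(τ⁻¹ * (y - m) ^ 2)) *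
        aeval y (physH n))) :=
      (integrable_gauss_poly hb m _).const_mul _
    have int12 : Integrable (fun y : ℝ => (-τ) * (Real.exp (-(τ⁻¹ * (y - m) ^ 2)) *
        aeval y (derivative (physH (n+1)) - C (2*τ⁻¹) * (X - C m) * physH (n+1)))
        + (2*m) * (Real.exp (-(τ⁻¹ * (y - m) ^ 2)) * aeval y (physH (n+1)))) := int1.add int2
    rw [integral_add int12 int3, integral_add int1 int2,
      integral_const_mul, integral_const_mul, integral_const_mul, hparts, ih1 m, ih2 m]
    have hval : aeval (m / Real.sqrt (1 - τ)) (physH (n+2)) =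
        2*(m / Real.sqrt (1 - τ))*aeval (m / Real.sqrt (1 - τ)) (physH (n+1))
          - 2*((n:ℝ)+1)*aeval (m / Real.sqrt (1 - τ)) (physH n) := by
      rw [physH_succ (n+1), derivative_physH]
      simp only [map_sub, map_mul, aeval_X, aeval_C, algebraMap_eq, Algebra.algebraMap_self_apply, eval_C]
    rw [hval, show τ - 1 = -Real.sqrt (1-τ)^2 by rw [hσ2]; ring]
    field_simp
    ring

/-- The dilated Hermite functions `D_γψ_k` are eigenfunctions of the time–frequency
localization operator `P_δ^{(γ)}` with eigenvalues `e^{−(k+1/2)δ}`: with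
`α = γ·√(coth δ)` and `β = γ⁻¹·√(coth δ)`,
`e^{−t²/(2α²)}·(β/√(2π cosh δ))·∫_ℝ exp(−(β²/2)(t/cosh δ − t′)²)·(D_γψ_k)(t′) dt′
  = e^{−(k+1/2)δ}·(D_γψ_k)(t)`. -/
theorem hermite_eigenfunctions
    (γ δ : ℝ) (hγ : 0 < γ) (hδ : 0 < δ)
    (α β : ℝ)
    (hα : α = γ * Real.sqrt (Real.cosh δ / Real.sinh δ))
    (hβ : β = γ⁻¹ * Real.sqrt (Real.cosh δ / Real.sinh δ))
    (k : ℕ) (t : ℝ) :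
    Real.exp (-(t ^ 2) / (2 * α ^ 2)) * (β / Real.sqrt (2 * π * Real.cosh δ)) *
        ∫ t' : ℝ, Real.exp (-(β ^ 2 / 2) * (t / Real.cosh δ - t') ^ 2) * dilHermite γ k t' =
      Real.exp (-(((k : ℝ) + 1 / 2) * δ)) * dilHermite γ k t := by
  have hc : 0 < Real.cosh δ := Real.cosh_pos δ
  have hs : 0 < Real.sinh δ := Real.sinh_pos_iff.2 hδ
  have hcs : Real.cosh δ - Real.sinh δ = Real.exp (-δ) := Real.cosh_sub_sinh δ
  have hcs' : Real.cosh δ + Real.sinh δ = Real.exp δ := Real.cosh_add_sinh δ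
  have hpyth : Real.cosh δ ^ 2 - Real.sinh δ ^ 2 = 1 := Real.cosh_sq_sub_sinh_sq δ
  set c : ℝ := Real.cosh δ with hcdef
  set s : ℝ := Real.sinh δ with hsdef
  have hcs0 : c + s ≠ 0 := by positivity
  set w : ℝ := c / s with hwdef
  have hw0 : 0 < w := div_pos hc hs
  have hw1 : 1 < w := by
    rw [hwdef, lt_div_iff₀ hs]
    nlinarith [Real.exp_pos (-δ)]
  set τ : ℝ := 2 / (w + 1) with hτdef
  have hτ0 : 0 < τ := by positivity
  have hτ1 : τ < 1 := by rw [hτdef, div_lt_one (by linarith)]; linarith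
  set m : ℝ := w * t / (γ * c * (w + 1)) with hmdef
  set N : ℝ := ((2 : ℝ) ^ k * (Nat.factorial k : ℝ) * Real.sqrt π) ^ (-(1 / 2 : ℝ)) with hNdef
  -- basic algebra facts
  have hβ2 : β ^ 2 = w / γ ^ 2 := by
    rw [hβ, mul_pow, Real.sq_sqrt hw0.le, inv_pow]
    ring
  have hα2 : α ^ 2 = γ ^ 2 * w := by
    rw [hα, mul_pow, Real.sq_sqrt hw0.le]
  have hβγ : β * γ = Real.sqrt w := by
    rw [hβ]; field_simp
  have hσe : Real.sqrt (1 - τ) = Real.exp (-δ) := by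
    have h1 : 1 - τ = Real.exp (-δ) ^ 2 := by
      have h2 : (1 : ℝ) - τ = (c - s) / (c + s) := by
        rw [hτdef, hwdef]
        field_simp
        ring
      rw [h2, hcs, hcs', ← Real.exp_sub, sq, ← Real.exp_add]
      ring_nf
    rw [h1, Real.sqrt_sq (Real.exp_pos _).le]
  have hm2 : m = t / γ * Real.exp (-δ) := by
    have h1 : m = t / (γ * (c + s)) := by
      rw [hmdef, hwdef]
      field_simp
    rw [h1, Real.exp_neg, ← hcs']
    field_simp
  have hmexp : m / Real.exp (-δ) = t / γ := by
    rw [hm2]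
    field_simp [Real.exp_ne_zero]
  have hEE : Real.exp (-(t ^ 2) / (2 * α ^ 2)) *
      Real.exp (-(w * (t / (γ * c)) ^ 2 / (2 * (w + 1)))) =
      Real.exp (-(t / γ) ^ 2 / 2) := by
    rw [← Real.exp_add]
    congr 1
    rw [hα2, hwdef]
    have h1 : c / s + 1 = (c + s)/s := by field_simp
    rw [h1]
    field_simp
    linear_combination t^2 * hpyth
  have hconst2 : β * γ * Real.sqrt (π * τ) = Real.exp (-(δ/2)) * Real.sqrt (2 * π * c) := by
    rw [hβγ, ← Real.sqrt_mul hw0.le]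
    have h3 : w * (π * τ) = Real.exp (-δ) * (2 * π * c) := by
      rw [hτdef, hwdef, Real.exp_neg, ← hcs']
      field_simp
    rw [h3, Real.sqrt_mul (Real.exp_pos _).le,
      show Real.exp (-δ) = Real.exp (-(δ/2)) ^ 2 by rw [sq, ← Real.exp_add]; ring_nf,
      Real.sqrt_sq (Real.exp_pos _).le]
  -- the substitution
  set g : ℝ → ℝ := fun t' => Real.exp (-(β ^ 2 / 2) * (t / c - t') ^ 2) * dilHermite γ k t'
    with hgdef
  have hsub : (∫ t' : ℝ, Real.exp (-(β ^ 2 / 2) * (t / c - t') ^ 2) * dilHermite γ k t')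
      = γ * ∫ x : ℝ, g (γ * x) := by
    rw [MeasureTheory.Measure.integral_comp_mul_left g γ, smul_eq_mul, abs_inv, abs_of_pos hγ]
    rw [hgdef]
    field_simp
  rw [hsub]
  -- pointwise identity for the substituted integrand
  have hpt : ∀ x : ℝ, g (γ * x) =
      (γ ^ (-(1 / 2 : ℝ)) * N * Real.exp (-(w * (t / (γ * c)) ^ 2 / (2 * (w + 1))))) *
        (Real.exp (-(τ⁻¹ * (x - m) ^ 2)) * aeval x (physH k)) := by
    intro x
    show Real.exp (-(β ^ 2 / 2) * (t / c - γ * x) ^ 2) * dilHermite γ k (γ * x) = _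
    rw [dilHermite, hermiteFun, physHermite_eq_aeval]
    have hγx : γ * x / γ = x := by field_simp
    rw [hγx, ← hNdef]
    have hired : Real.exp (-(β ^ 2 / 2) * (t / c - γ * x) ^ 2) * Real.exp (-(x ^ 2) / 2)
        = Real.exp (-(w * (t / (γ * c)) ^ 2 / (2 * (w + 1)))) *
          Real.exp (-(τ⁻¹ * (x - m) ^ 2)) := by
      rw [← Real.exp_add, ← Real.exp_add]
      congr 1
      rw [hβ2, hmdef, hτdef]
      field_simp
      ring
    linear_combination (γ ^ (-(1 / 2 : ℝ)) * N * aeval x (physH k)) * hired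
  simp only [hpt]
  rw [integral_const_mul, key_integral hτ0 hτ1 k m, hσe, hmexp]
  -- final bookkeeping
  rw [dilHermite, hermiteFun, physHermite_eq_aeval, ← hNdef]
  rw [show -(((k : ℝ) + 1 / 2) * δ) = -((k : ℝ) * δ) + -(δ / 2) by ring, Real.exp_add]
  have hδ2 : Real.exp (-(δ/2)) = β * γ * Real.sqrt (π * τ) / Real.sqrt (2 * π * c) := by
    rw [hconst2]
    field_simp
  have hexpk : Real.exp (-δ) ^ k = Real.exp (-((k : ℝ) * δ)) := by
    rw [← Real.exp_nat_mul]
    ring_nf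
  rw [hδ2, hexpk]
  linear_combination (β * γ * Real.sqrt (π * τ) * γ ^ (-(1 / 2 : ℝ)) * N *
    Real.exp (-((k : ℝ) * δ)) * aeval (t / γ) (physH k) / Real.sqrt (2 * π * c)) * hEE
end

section
/- Let α, β > 0 with αβ > 1, set γ = √(α/β) and δ = arccoth(αβ). For f ∈ L¹(ℝ) (complex-valued) define g(t) = e^{−t²/(2α²)}·(β/√(2π cosh δ))·∫_ℝ exp(−(β²/2)·(t/cosh δ − t′)²)·f(t′) dt′. Then g ∈ L¹(ℝ) and for all ω ∈ ℝ, (1/√(2π))·∫_ℝ e^{−itω}·g(t) dt = e^{−ω²/(2β²)}·(α/√(2π cosh δ))·∫_ℝ exp(−(α²/2)·(ω/cosh δ − ω′)²)·f̂(ω′) dω′, where f̂(ω) = (1/√(2π))·∫_ℝ e^{−itω}·f(t) dt. -/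
open Real MeasureTheory Complex

lemma gauss_int (b : ℝ) (hb : 0 < b) (c d : ℂ) :
    ∫ x : ℝ, Complex.exp (((-b : ℝ) : ℂ) * x ^ 2 + c * x + d) =
      ((Real.sqrt (π / b) : ℝ) : ℂ) * Complex.exp (d + c ^ 2 / (4 * b)) := by
  rw [integral_cexp_quadratic (by simpa using hb)]
  congr 1
  · rw [show (↑π / -((-b : ℝ) : ℂ)) = ((π / b : ℝ) : ℂ) by push_cast; ring]
    rw [show (1/2 : ℂ) = ((1/2 : ℝ) : ℂ) by norm_num, ← Complex.ofReal_cpow (by positivity),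
      ← Real.sqrt_eq_rpow]
  · congr 1
    push_cast
    field_simp
    ring

/-- Equation (5) of the paper: the Fourier transform of the output of the time–frequency
localization filter has the same form as the filter itself with the roles of `α` and `β`
interchanged. Here `α, β > 0` with `αβ > 1`, `δ = arccoth(αβ)` (i.e. `δ > 0` and
`coth δ = αβ`), `f ∈ L¹(ℝ)` is complex-valued, and
`g(t) = e^{−t²/(2α²)}·(β/√(2π cosh δ))·∫ exp(−(β²/2)(t/cosh δ − t′)²)·f(t′) dt′`.
Then `g ∈ L¹(ℝ)` and
`ĝ(ω) = e^{−ω²/(2β²)}·(α/√(2π cosh δ))·∫ exp(−(α²/2)(ω/cosh δ − ω′)²)·f̂(ω′) dω′`,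
where `f̂(ω) = (1/√(2π))·∫ e^{−itω} f(t) dt`. -/
theorem filter_output_fourier_transform
    (α β : ℝ) (hα : 0 < α) (hβ : 0 < β) (hαβ : 1 < α * β)
    (δ : ℝ) (hδ : 0 < δ) (hcoth : Real.cosh δ / Real.sinh δ = α * β)
    (f : ℝ → ℂ) (hf : MeasureTheory.Integrable f)
    (g : ℝ → ℂ)
    (hg : ∀ t : ℝ, g t =
      ((Real.exp (-(t ^ 2) / (2 * α ^ 2)) * (β / Real.sqrt (2 * π * Real.cosh δ)) : ℝ) : ℂ) *
        ∫ t' : ℝ, ((Real.exp (-(β ^ 2 / 2) * (t / Real.cosh δ - t') ^ 2) : ℝ) : ℂ) * f t') :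
    MeasureTheory.Integrable g ∧
    ∀ ω : ℝ,
      ((1 / Real.sqrt (2 * π) : ℝ) : ℂ) *
          ∫ t : ℝ, Complex.exp (-Complex.I * (t : ℂ) * (ω : ℂ)) * g t =
        ((Real.exp (-(ω ^ 2) / (2 * β ^ 2)) * (α / Real.sqrt (2 * π * Real.cosh δ)) : ℝ) : ℂ) *
          ∫ ω' : ℝ, ((Real.exp (-(α ^ 2 / 2) * (ω / Real.cosh δ - ω') ^ 2) : ℝ) : ℂ) *
            (((1 / Real.sqrt (2 * π) : ℝ) : ℂ) *
              ∫ t : ℝ, Complex.exp (-Complex.I * (t : ℂ) * (ω' : ℂ)) * f t) := by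
  have hα' : α ≠ 0 := hα.ne'
  have hβ' : β ≠ 0 := hβ.ne'
  set C := Real.cosh δ with hCdef
  have hC0 : (0:ℝ) < C := Real.cosh_pos δ
  have hC' : C ≠ 0 := hC0.ne'
  have hs0 : 0 < Real.sinh δ := Real.sinh_pos_iff.2 hδ
  have hch : C = α * β * Real.sinh δ := by
    field_simp at hcoth; linarith
  have hrel : α ^ 2 * β ^ 2 * (C ^ 2 - 1) = C ^ 2 := by
    have h1 : C ^ 2 - Real.sinh δ ^ 2 = 1 := Real.cosh_sq_sub_sinh_sq δ
    have h2 : C ^ 2 - 1 = Real.sinh δ ^ 2 := by linarith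
    rw [h2, hch]; ring
  have keyR : β ^ 2 / (2 * C ^ 2) - β ^ 2 / 2 = -(1 / (2 * α ^ 2)) := by
    field_simp
    linear_combination (-1 : ℝ) * hrel
  have keyC : ((β : ℂ) ^ 2 / (2 * (C : ℂ) ^ 2) - (β : ℂ) ^ 2 / 2) = -(1 / (2 * (α : ℂ) ^ 2)) := by
    have := congrArg (fun x : ℝ => (x : ℂ)) keyR
    push_cast at this
    exact this
  have hS0 : (0:ℝ) < Real.sqrt (2 * π * C) := Real.sqrt_pos.2 (by positivity)
  set S := Real.sqrt (2 * π * C) with hSdef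
  have hS' : S ≠ 0 := hS0.ne'
  have h2π : (0:ℝ) < Real.sqrt (2 * π) := Real.sqrt_pos.2 (by positivity)
  have h2π' : Real.sqrt (2 * π) ≠ 0 := h2π.ne'
  have hGauss : Integrable (fun t : ℝ => Real.exp (-(t ^ 2) / (2 * α ^ 2))) := by
    have h1 : ∀ t : ℝ, -(t ^ 2) / (2 * α ^ 2) = -((2 * α ^ 2)⁻¹ * t ^ 2) := fun t => by ring
    simp_rw [h1]
    simpa using integrable_exp_neg_mul_sq (show (0:ℝ) < (2 * α ^ 2)⁻¹ by positivity)
  have hF0i : Integrable (fun p : ℝ × ℝ =>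
      ((Real.exp (-(p.1 ^ 2) / (2 * α ^ 2)) * (β / S) : ℝ) : ℂ) *
        ((Real.exp (-(β ^ 2 / 2) * (p.1 / C - p.2) ^ 2) : ℝ) : ℂ) * f p.2)
      (volume.prod volume) := by
    have hmeas : AEStronglyMeasurable (fun p : ℝ × ℝ =>
        ((Real.exp (-(p.1 ^ 2) / (2 * α ^ 2)) * (β / S) : ℝ) : ℂ) *
          ((Real.exp (-(β ^ 2 / 2) * (p.1 / C - p.2) ^ 2) : ℝ) : ℂ) * f p.2)
        (volume.prod volume) := by
      apply AEStronglyMeasurable.mul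
      · apply Continuous.aestronglyMeasurable
        fun_prop
      · exact hf.1.comp_snd
    apply Integrable.mono' ((hGauss.mul_const (β / S)).mul_prod hf.norm) hmeas
    filter_upwards with p
    have h2 : Real.exp (-(β ^ 2 / 2) * (p.1 / C - p.2) ^ 2) ≤ 1 := by
      rw [Real.exp_le_one_iff]
      nlinarith [sq_nonneg (p.1 / C - p.2)]
    have h0 : (0:ℝ) < β / S := by positivity
    rw [norm_mul, norm_mul, Complex.norm_real, Complex.norm_real, Real.norm_eq_abs,
      Real.norm_eq_abs, abs_of_pos (by positivity), abs_of_pos (Real.exp_pos _)]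
    have hn : (0:ℝ) ≤ ‖f p.2‖ := norm_nonneg _
    nlinarith [Real.exp_pos (-(p.1 ^ 2) / (2 * α ^ 2)),
      mul_nonneg (mul_nonneg (Real.exp_pos (-(p.1 ^ 2) / (2 * α ^ 2))).le h0.le) hn]
  have hg2 : ∀ t : ℝ, g t = ∫ t' : ℝ,
      ((Real.exp (-(t ^ 2) / (2 * α ^ 2)) * (β / S) : ℝ) : ℂ) *
        ((Real.exp (-(β ^ 2 / 2) * (t / C - t') ^ 2) : ℝ) : ℂ) * f t' := by
    intro t
    rw [hg t, ← integral_const_mul]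
    congr 1; funext t'; ring
  have hgint : Integrable g :=
    (hF0i.integral_prod_left).congr (Filter.Eventually.of_forall fun t => (hg2 t).symm)
  refine ⟨hgint, fun ω => ?_⟩
  set E : ℝ → ℂ := fun x => -(ω:ℂ) ^ 2 / (2 * (β:ℂ) ^ 2) - Complex.I * ω * x / (C:ℂ) -
      (x:ℂ) ^ 2 / (2 * (α:ℂ) ^ 2) with hEdef
  have hsqβ : Real.sqrt (π / (β ^ 2 / 2)) = Real.sqrt (2 * π) / β := by
    rw [show π / (β ^ 2 / 2) = (Real.sqrt (2 * π) / β) ^ 2 by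
      rw [div_pow, Real.sq_sqrt (by positivity)]; ring, Real.sqrt_sq (by positivity)]
  have hsqα : Real.sqrt (π / (α ^ 2 / 2)) = Real.sqrt (2 * π) / α := by
    rw [show π / (α ^ 2 / 2) = (Real.sqrt (2 * π) / α) ^ 2 by
      rw [div_pow, Real.sq_sqrt (by positivity)]; ring, Real.sqrt_sq (by positivity)]
  -- LHS computation
  have hLHS : ((1 / Real.sqrt (2 * π) : ℝ) : ℂ) *
      ∫ t : ℝ, Complex.exp (-Complex.I * (t : ℂ) * (ω : ℂ)) * g t =
      ((1 / S : ℝ) : ℂ) * ∫ x : ℝ, Complex.exp (E x) * f x := by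
    have hF1i : Integrable (fun p : ℝ × ℝ =>
        Complex.exp (-Complex.I * (p.1 : ℂ) * (ω : ℂ)) *
          (((Real.exp (-(p.1 ^ 2) / (2 * α ^ 2)) * (β / S) : ℝ) : ℂ) *
            ((Real.exp (-(β ^ 2 / 2) * (p.1 / C - p.2) ^ 2) : ℝ) : ℂ) * f p.2))
        (volume.prod volume) := by
      apply hF0i.bdd_mul (c := 1)
      · apply Continuous.aestronglyMeasurable; fun_prop
      · refine Filter.Eventually.of_forall fun p => ?_
        rw [Complex.norm_exp]
        simp
    have step1 : (∫ t : ℝ, Complex.exp (-Complex.I * (t : ℂ) * (ω : ℂ)) * g t) =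
        ∫ t : ℝ, ∫ t' : ℝ, Complex.exp (-Complex.I * (t : ℂ) * (ω : ℂ)) *
          (((Real.exp (-(t ^ 2) / (2 * α ^ 2)) * (β / S) : ℝ) : ℂ) *
            ((Real.exp (-(β ^ 2 / 2) * (t / C - t') ^ 2) : ℝ) : ℂ) * f t') := by
      congr 1; funext t
      rw [hg2 t, ← integral_const_mul]
    have step2 := integral_integral_swap (f := fun (t : ℝ) (t' : ℝ) =>
        Complex.exp (-Complex.I * (t : ℂ) * (ω : ℂ)) *
          (((Real.exp (-(t ^ 2) / (2 * α ^ 2)) * (β / S) : ℝ) : ℂ) *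
            ((Real.exp (-(β ^ 2 / 2) * (t / C - t') ^ 2) : ℝ) : ℂ) * f t')) hF1i
    have hinner : ∀ t' : ℝ, (∫ t : ℝ, Complex.exp (-Complex.I * (t : ℂ) * (ω : ℂ)) *
        (((Real.exp (-(t ^ 2) / (2 * α ^ 2)) * (β / S) : ℝ) : ℂ) *
          ((Real.exp (-(β ^ 2 / 2) * (t / C - t') ^ 2) : ℝ) : ℂ) * f t')) =
        (((β / S) * (Real.sqrt (2 * π) / β) : ℝ) : ℂ) * (Complex.exp (E t') * f t') := by
      intro t'
      have hp : ∀ t : ℝ, Complex.exp (-Complex.I * (t : ℂ) * (ω : ℂ)) *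
          (((Real.exp (-(t ^ 2) / (2 * α ^ 2)) * (β / S) : ℝ) : ℂ) *
            ((Real.exp (-(β ^ 2 / 2) * (t / C - t') ^ 2) : ℝ) : ℂ) * f t') =
          ((β / S : ℝ) : ℂ) * (Complex.exp (((-(β ^ 2 / 2) : ℝ) : ℂ) * t ^ 2 +
            (((β ^ 2 * t' / C : ℝ) : ℂ) - Complex.I * ω) * t +
            ((-(β ^ 2 / 2) * t' ^ 2 : ℝ) : ℂ)) * f t') := by
        intro t
        rw [show (((-(β ^ 2 / 2) : ℝ) : ℂ) * t ^ 2 +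
            (((β ^ 2 * t' / C : ℝ) : ℂ) - Complex.I * ω) * t +
            ((-(β ^ 2 / 2) * t' ^ 2 : ℝ) : ℂ)) =
            (-Complex.I * (t : ℂ) * (ω : ℂ)) + ((-(t ^ 2) / (2 * α ^ 2) : ℝ) : ℂ) +
            ((-(β ^ 2 / 2) * (t / C - t') ^ 2 : ℝ) : ℂ) from by
          push_cast
          linear_combination (t : ℂ) ^ 2 * keyC]
        rw [Complex.exp_add, Complex.exp_add, ← Complex.ofReal_exp, ← Complex.ofReal_exp]
        push_cast
        ring
      simp_rw [hp]
      rw [integral_const_mul, integral_mul_const,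
        gauss_int (β ^ 2 / 2) (by positivity), hsqβ]
      rw [show ((-(β ^ 2 / 2) * t' ^ 2 : ℝ) : ℂ) +
          ((((β ^ 2 * t' / C : ℝ) : ℂ) - Complex.I * ω)) ^ 2 / (4 * ((β ^ 2 / 2 : ℝ) : ℂ)) =
          E t' from by
        have hβC : ((β : ℂ)) ≠ 0 := by exact_mod_cast hβ'
        have hinvβ : (β:ℂ) ^ 2 * ((β:ℂ) ^ 2)⁻¹ = 1 := mul_inv_cancel₀ (pow_ne_zero 2 hβC)
        rw [hEdef]
        push_cast
        linear_combination (t':ℂ) ^ 2 * keyC + ((ω:ℂ) ^ 2 / (2 * (β:ℂ) ^ 2)) * Complex.I_sq +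
          (-(t':ℂ) * ((C:ℂ))⁻¹ * Complex.I * ω +
            (β:ℂ) ^ 2 * (t':ℂ) ^ 2 * ((C:ℂ))⁻¹ ^ 2 / 2) * hinvβ]
      push_cast
      ring
    rw [step1, step2]
    simp_rw [hinner]
    rw [integral_const_mul, ← mul_assoc, ← Complex.ofReal_mul,
      show (1 / Real.sqrt (2 * π)) * ((β / S) * (Real.sqrt (2 * π) / β)) = 1 / S from by
        field_simp]
  rw [hLHS]
  -- RHS computation
  have hGaussα : Integrable (fun x : ℝ => Real.exp (-(α ^ 2 / 2) * (ω / C - x) ^ 2)) := by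
    have h1 : ∀ x : ℝ, -(α ^ 2 / 2) * (ω / C - x) ^ 2 = -(α ^ 2 / 2) * (x - ω / C) ^ 2 :=
      fun x => by ring
    simp_rw [h1]
    exact (integrable_exp_neg_mul_sq (show (0:ℝ) < α ^ 2 / 2 by positivity)).comp_sub_right
      (ω / C)
  have hF2i : Integrable (fun p : ℝ × ℝ =>
      ((Real.exp (-(α ^ 2 / 2) * (ω / C - p.1) ^ 2) : ℝ) : ℂ) *
        (Complex.exp (-Complex.I * (p.2 : ℂ) * (p.1 : ℂ)) * f p.2))
      (volume.prod volume) := by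
    have hmeas : AEStronglyMeasurable (fun p : ℝ × ℝ =>
        ((Real.exp (-(α ^ 2 / 2) * (ω / C - p.1) ^ 2) : ℝ) : ℂ) *
          (Complex.exp (-Complex.I * (p.2 : ℂ) * (p.1 : ℂ)) * f p.2))
        (volume.prod volume) := by
      apply AEStronglyMeasurable.mul
      · apply Continuous.aestronglyMeasurable; fun_prop
      · exact (Continuous.aestronglyMeasurable (by fun_prop)).mul hf.1.comp_snd
    apply Integrable.mono' (hGaussα.mul_prod hf.norm) hmeas
    filter_upwards with p
    rw [norm_mul, norm_mul, Complex.norm_real, Real.norm_eq_abs,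
      abs_of_pos (Real.exp_pos _), Complex.norm_exp]
    simp
  have hR1 : ∀ ω' : ℝ, ((Real.exp (-(α ^ 2 / 2) * (ω / C - ω') ^ 2) : ℝ) : ℂ) *
      (((1 / Real.sqrt (2 * π) : ℝ) : ℂ) *
        ∫ t : ℝ, Complex.exp (-Complex.I * (t : ℂ) * (ω' : ℂ)) * f t) =
      ((1 / Real.sqrt (2 * π) : ℝ) : ℂ) * ∫ t : ℝ,
        ((Real.exp (-(α ^ 2 / 2) * (ω / C - ω') ^ 2) : ℝ) : ℂ) *
          (Complex.exp (-Complex.I * (t : ℂ) * (ω' : ℂ)) * f t) := by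
    intro ω'
    rw [integral_const_mul]
    ring
  have step2' := integral_integral_swap (f := fun (ω' : ℝ) (t : ℝ) =>
      ((Real.exp (-(α ^ 2 / 2) * (ω / C - ω') ^ 2) : ℝ) : ℂ) *
        (Complex.exp (-Complex.I * (t : ℂ) * (ω' : ℂ)) * f t)) hF2i
  have hinner2 : ∀ t : ℝ, (∫ ω' : ℝ,
      ((Real.exp (-(α ^ 2 / 2) * (ω / C - ω') ^ 2) : ℝ) : ℂ) *
        (Complex.exp (-Complex.I * (t : ℂ) * (ω' : ℂ)) * f t)) =
      ((Real.sqrt (2 * π) / α : ℝ) : ℂ) *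
        (Complex.exp (-Complex.I * ω * t / (C:ℂ) - (t:ℂ) ^ 2 / (2 * (α:ℂ) ^ 2)) * f t) := by
    intro t
    have hp : ∀ ω' : ℝ, ((Real.exp (-(α ^ 2 / 2) * (ω / C - ω') ^ 2) : ℝ) : ℂ) *
        (Complex.exp (-Complex.I * (t : ℂ) * (ω' : ℂ)) * f t) =
        Complex.exp (((-(α ^ 2 / 2) : ℝ) : ℂ) * ω' ^ 2 +
          (((α ^ 2 * ω / C : ℝ) : ℂ) - Complex.I * t) * ω' +
          ((-(α ^ 2 / 2) * (ω / C) ^ 2 : ℝ) : ℂ)) * f t := by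
      intro ω'
      rw [show (((-(α ^ 2 / 2) : ℝ) : ℂ) * ω' ^ 2 +
          (((α ^ 2 * ω / C : ℝ) : ℂ) - Complex.I * t) * ω' +
          ((-(α ^ 2 / 2) * (ω / C) ^ 2 : ℝ) : ℂ)) =
          ((-(α ^ 2 / 2) * (ω / C - ω') ^ 2 : ℝ) : ℂ) + (-Complex.I * (t : ℂ) * (ω' : ℂ))
          from by push_cast; ring]
      rw [Complex.exp_add, ← Complex.ofReal_exp]
      ring
    simp_rw [hp]
    rw [integral_mul_const, gauss_int (α ^ 2 / 2) (by positivity), hsqα]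
    rw [show ((-(α ^ 2 / 2) * (ω / C) ^ 2 : ℝ) : ℂ) +
        ((((α ^ 2 * ω / C : ℝ) : ℂ) - Complex.I * t)) ^ 2 / (4 * ((α ^ 2 / 2 : ℝ) : ℂ)) =
        -Complex.I * ω * t / (C:ℂ) - (t:ℂ) ^ 2 / (2 * (α:ℂ) ^ 2) from by
      have hαC : ((α : ℂ)) ≠ 0 := by exact_mod_cast hα'
      have hinv : (α:ℂ) ^ 2 * ((α:ℂ) ^ 2)⁻¹ = 1 := mul_inv_cancel₀ (pow_ne_zero 2 hαC)
      push_cast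
      linear_combination ((t:ℂ) ^ 2 / (2 * (α:ℂ) ^ 2)) * Complex.I_sq +
        (-(ω:ℂ) * ((C:ℂ))⁻¹ * Complex.I * t +
          (α:ℂ) ^ 2 * (ω:ℂ) ^ 2 * ((C:ℂ))⁻¹ ^ 2 / 2) * hinv]
    ring
  have hEsplit : ∀ x : ℝ, Complex.exp (E x) * f x =
      ((Real.exp (-(ω ^ 2) / (2 * β ^ 2)) : ℝ) : ℂ) *
        (Complex.exp (-Complex.I * ω * x / (C:ℂ) - (x:ℂ) ^ 2 / (2 * (α:ℂ) ^ 2)) * f x) := by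
    intro x
    rw [show E x = ((-(ω ^ 2) / (2 * β ^ 2) : ℝ) : ℂ) +
        (-Complex.I * ω * x / (C:ℂ) - (x:ℂ) ^ 2 / (2 * (α:ℂ) ^ 2)) from by
      rw [hEdef]; push_cast; ring]
    rw [Complex.exp_add, ← Complex.ofReal_exp]
    ring
  simp_rw [hR1]
  rw [integral_const_mul, step2']
  simp_rw [hinner2]
  rw [integral_const_mul]
  simp_rw [hEsplit]
  rw [integral_const_mul, ← mul_assoc, ← mul_assoc, ← mul_assoc, ← Complex.ofReal_mul,
    ← Complex.ofReal_mul, ← Complex.ofReal_mul]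
  congr 1
  exact_mod_cast show (1 / S * Real.exp (-ω ^ 2 / (2 * β ^ 2))) =
    Real.exp (-ω ^ 2 / (2 * β ^ 2)) * (α / S) * (1 / Real.sqrt (2 * π)) *
      (Real.sqrt (2 * π) / α) from by field_simp
end

section
/- Fix s ≥ 1. Then lim_{δ→0+} δ·Σ_{k=0}^∞ (1/s)·max(0, 1 − e^{(2k+1)δ}/s) = (1/2)·(ln s)/s − (1/(2s))·(1 − 1/s). -/
open Real Filter Set

open intervalIntegral MeasureTheory

noncomputable def mmseA (s x : ℝ) : ℝ := (1 / s) * (x - Real.exp (2 * x) / (2 * s))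
noncomputable def mmseG (s x : ℝ) : ℝ := (1 / s) * max 0 (1 - Real.exp (2 * x) / s)

lemma mmseG_nonneg (s : ℝ) (hs : 0 < s) (x : ℝ) : 0 ≤ mmseG s x := by
  unfold mmseG; positivity

lemma mmseG_continuous (s : ℝ) : Continuous (mmseG s) := by
  unfold mmseG
  exact continuous_const.mul (continuous_const.max (by fun_prop))

lemma mmseG_antitone (s : ℝ) (hs : 0 < s) : Antitone (mmseG s) := by
  intro x y hxy
  unfold mmseG
  apply mul_le_mul_of_nonneg_left _ (by positivity)
  apply max_le_max le_rfl
  have h : Real.exp (2 * x) ≤ Real.exp (2 * y) := Real.exp_le_exp.2 (by linarith)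
  have h2 : Real.exp (2 * x) / s ≤ Real.exp (2 * y) / s := by
    exact div_le_div_of_nonneg_right h hs.le
  linarith
  
lemma mmseA_hasDeriv (s : ℝ) (hs : 0 < s) (x : ℝ) :
    HasDerivAt (mmseA s) ((1 / s) * (1 - Real.exp (2 * x) / s)) x := by
  have h1 : HasDerivAt (fun x : ℝ => Real.exp (2 * x)) (2 * Real.exp (2 * x)) x := by
    simpa [mul_comm] using ((hasDerivAt_id x).const_mul 2).exp
  have h2 : HasDerivAt (fun x : ℝ => x - Real.exp (2 * x) / (2 * s))
      (1 - (2 * Real.exp (2 * x)) / (2 * s)) x := (hasDerivAt_id x).sub (h1.div_const _)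
  have := h2.const_mul (1 / s)
  convert this using 1
  · rfl
  · rfl
  · rfl
  rw [mul_div_mul_left _ _ (two_ne_zero' ℝ)]

lemma mmseG_step_le (s : ℝ) (hs : 0 < s) {a b : ℝ} (hab : a ≤ b) :
    (b - a) * mmseG s b ≤ ∫ x in a..b, mmseG s x := by
  have hInt : IntervalIntegrable (mmseG s) volume a b :=
    (mmseG_continuous s).intervalIntegrable _ _
  have h := intervalIntegral.integral_mono_on hab (intervalIntegrable_const) hInt
    (fun x hx => mmseG_antitone s hs hx.2)
  simpa [intervalIntegral.integral_const, smul_eq_mul] using h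

lemma mmseG_step_ge (s : ℝ) (hs : 0 < s) {a b : ℝ} (hab : a ≤ b) :
    (∫ x in a..b, mmseG s x) ≤ (b - a) * mmseG s a := by
  have hInt : IntervalIntegrable (mmseG s) volume a b :=
    (mmseG_continuous s).intervalIntegrable _ _
  have h := intervalIntegral.integral_mono_on hab hInt (intervalIntegrable_const)
    (fun x hx => mmseG_antitone s hs hx.1)
  simpa [intervalIntegral.integral_const, smul_eq_mul] using h

lemma mmseG_eq_of_le (s : ℝ) (hs : 0 < s) {x : ℝ} (hx : Real.exp (2 * x) ≤ s) :
    mmseG s x = (1 / s) * (1 - Real.exp (2 * x) / s) := by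
  unfold mmseG
  rw [max_eq_right]
  rw [sub_nonneg, div_le_one hs]
  exact hx

lemma mmseG_eq_zero (s : ℝ) (hs : 0 < s) {x : ℝ} (hx : s ≤ Real.exp (2 * x)) :
    mmseG s x = 0 := by
  unfold mmseG
  rw [max_eq_left, mul_zero]
  rw [sub_nonpos, le_div_iff₀ hs, one_mul]
  exact hx

lemma mmseG_integral_eq (s : ℝ) (hs : 0 < s) {a b L : ℝ} (hL : Real.exp (2 * L) = s)
    (ha : a ≤ L) (hb : b ≤ L) :
    (∫ x in a..b, mmseG s x) = mmseA s b - mmseA s a := by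
  have hcong : EqOn (mmseG s) (fun x => (1 / s) * (1 - Real.exp (2 * x) / s)) (uIcc a b) := by
    intro x hx
    have hxL : x ≤ L := le_trans hx.2 (max_le ha hb)
    exact mmseG_eq_of_le s hs (by rw [← hL]; exact Real.exp_le_exp.2 (by linarith))
  rw [intervalIntegral.integral_congr hcong]
  exact intervalIntegral.integral_eq_sub_of_hasDerivAt
    (fun x _ => mmseA_hasDeriv s hs x) ((by fun_prop : Continuous fun x => (1 / s) * (1 - Real.exp (2 * x) / s)).intervalIntegrable _ _)

lemma mmseG_integral_zero (s : ℝ) (hs : 0 < s) {a b L : ℝ} (hL : Real.exp (2 * L) = s)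
    (ha : L ≤ a) (hb : L ≤ b) :
    (∫ x in a..b, mmseG s x) = 0 := by
  have hcong : EqOn (mmseG s) (fun _ => (0:ℝ)) (uIcc a b) := by
    intro x hx
    have hxL : L ≤ x := le_trans (le_min ha hb) hx.1
    exact mmseG_eq_zero s hs (by rw [← hL]; exact Real.exp_le_exp.2 (by linarith))
  rw [intervalIntegral.integral_congr hcong, intervalIntegral.integral_const, smul_zero]

lemma mmse_setup (s : ℝ) (hs : 1 ≤ s) :
    0 < s ∧ 0 ≤ Real.log s / 2 ∧ Real.exp (2 * (Real.log s / 2)) = s := by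
  have hs0 : 0 < s := lt_of_lt_of_le one_pos hs
  refine ⟨hs0, by have := Real.log_nonneg hs; linarith, ?_⟩
  rw [show 2 * (Real.log s / 2) = Real.log s by ring, Real.exp_log hs0]

lemma mmse_upper (s : ℝ) (hs : 1 ≤ s) {δ : ℝ} (hδ : 0 < δ) :
    δ * ∑' k : ℕ, (1 / s) * max 0 (1 - Real.exp ((2 * (k : ℝ) + 1) * δ) / s)
      ≤ mmseA s (Real.log s / 2) - mmseA s (-(δ / 2)) := by
  obtain ⟨hs0, hL, hexpL⟩ := mmse_setup s hs
  set L : ℝ := Real.log s / 2 with hLdef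
  have hfk : ∀ k : ℕ, (1 / s) * max 0 (1 - Real.exp ((2 * (k : ℝ) + 1) * δ) / s)
      = mmseG s (((k : ℝ) + 1 / 2) * δ) := by
    intro k; unfold mmseG
    rw [show 2 * (((k : ℝ) + 1 / 2) * δ) = (2 * (k : ℝ) + 1) * δ by ring]
  set N : ℕ := ⌈L / δ⌉₊ + 1 with hNdef
  have hceil : L / δ ≤ (⌈L / δ⌉₊ : ℝ) := Nat.le_ceil _
  have hLc : L ≤ (⌈L / δ⌉₊ : ℝ) * δ := (div_le_iff₀ hδ).mp hceil
  have hNδ : L + δ ≤ (N : ℝ) * δ := by push_cast [hNdef]; nlinarith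
  have htsum : (∑' k : ℕ, (1 / s) * max 0 (1 - Real.exp ((2 * (k : ℝ) + 1) * δ) / s))
      = ∑ k ∈ Finset.range N, mmseG s (((k : ℝ) + 1 / 2) * δ) := by
    rw [tsum_eq_sum (s := Finset.range N) ?_]
    · exact Finset.sum_congr rfl fun k _ => hfk k
    · intro k hk
      rw [hfk k]
      have hkN : (N : ℝ) ≤ (k : ℝ) := by
        exact_mod_cast Nat.le_of_not_lt (fun h => hk (Finset.mem_range.mpr h))
      apply mmseG_eq_zero s hs0
      rw [← hexpL]
      apply Real.exp_le_exp.2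
      have : (N : ℝ) * δ ≤ ((k : ℝ) + 1 / 2) * δ := by nlinarith
      linarith
  set a : ℕ → ℝ := fun j => (j : ℝ) * δ - δ / 2 with hadef
  have hmono : ∀ j : ℕ, a j ≤ a (j + 1) := by
    intro j; simp only [hadef]; push_cast; nlinarith
  have hstep : ∀ k : ℕ, δ * mmseG s (((k : ℝ) + 1 / 2) * δ)
      ≤ ∫ x in a k..a (k + 1), mmseG s x := by
    intro k
    have h1 : a (k + 1) = ((k : ℝ) + 1 / 2) * δ := by simp only [hadef]; push_cast; ring
    have h2 : a (k + 1) - a k = δ := by simp only [hadef]; push_cast; ring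
    have := mmseG_step_le s hs0 (hmono k)
    rw [h2] at this; rw [← h1]; exact this
  have hInt : ∀ u v : ℝ, IntervalIntegrable (mmseG s) volume u v :=
    fun u v => (mmseG_continuous s).intervalIntegrable _ _
  have hsum : ∑ k ∈ Finset.range N, ∫ x in a k..a (k + 1), mmseG s x
      = ∫ x in (a 0)..a N, mmseG s x :=
    intervalIntegral.sum_integral_adjacent_intervals (fun k _ => hInt _ _)
  have ha0 : a 0 = -(δ / 2) := by simp [hadef]
  have haN : L ≤ a N := by simp only [hadef]; nlinarith
  have hsplit : (∫ x in (a 0)..a N, mmseG s x)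
      = (∫ x in (a 0)..L, mmseG s x) + ∫ x in L..a N, mmseG s x :=
    (intervalIntegral.integral_add_adjacent_intervals (hInt _ _) (hInt _ _)).symm
  have hz : (∫ x in L..a N, mmseG s x) = 0 := mmseG_integral_zero s hs0 hexpL le_rfl haN
  have heq : (∫ x in (a 0)..L, mmseG s x) = mmseA s L - mmseA s (-(δ / 2)) := by
    rw [ha0]; exact mmseG_integral_eq s hs0 hexpL (by linarith) le_rfl
  calc δ * ∑' k : ℕ, (1 / s) * max 0 (1 - Real.exp ((2 * (k : ℝ) + 1) * δ) / s)
      = ∑ k ∈ Finset.range N, δ * mmseG s (((k : ℝ) + 1 / 2) * δ) := by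
        rw [htsum, Finset.mul_sum]
    _ ≤ ∑ k ∈ Finset.range N, ∫ x in a k..a (k + 1), mmseG s x :=
        Finset.sum_le_sum fun k _ => hstep k
    _ = mmseA s L - mmseA s (-(δ / 2)) := by rw [hsum, hsplit, hz, heq, add_zero]

lemma mmse_lower (s : ℝ) (hs : 1 ≤ s) {δ : ℝ} (hδ : 0 < δ) :
    mmseA s (Real.log s / 2) - mmseA s (min (δ / 2) (Real.log s / 2))
      ≤ δ * ∑' k : ℕ, (1 / s) * max 0 (1 - Real.exp ((2 * (k : ℝ) + 1) * δ) / s) := by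
  obtain ⟨hs0, hL, hexpL⟩ := mmse_setup s hs
  set L : ℝ := Real.log s / 2 with hLdef
  have hfk : ∀ k : ℕ, (1 / s) * max 0 (1 - Real.exp ((2 * (k : ℝ) + 1) * δ) / s)
      = mmseG s (((k : ℝ) + 1 / 2) * δ) := by
    intro k; unfold mmseG
    rw [show 2 * (((k : ℝ) + 1 / 2) * δ) = (2 * (k : ℝ) + 1) * δ by ring]
  rcases le_or_gt (δ / 2) L with hcase | hcase
  · rw [min_eq_left hcase]
    set N : ℕ := ⌈L / δ⌉₊ + 1 with hNdef
    have hceil : L / δ ≤ (⌈L / δ⌉₊ : ℝ) := Nat.le_ceil _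
    have hLc : L ≤ (⌈L / δ⌉₊ : ℝ) * δ := (div_le_iff₀ hδ).mp hceil
    have hNδ : L + δ ≤ (N : ℝ) * δ := by push_cast [hNdef]; nlinarith
    have htsum : (∑' k : ℕ, (1 / s) * max 0 (1 - Real.exp ((2 * (k : ℝ) + 1) * δ) / s))
        = ∑ k ∈ Finset.range N, mmseG s (((k : ℝ) + 1 / 2) * δ) := by
      rw [tsum_eq_sum (s := Finset.range N) ?_]
      · exact Finset.sum_congr rfl fun k _ => hfk k
      · intro k hk
        rw [hfk k]
        have hkN : (N : ℝ) ≤ (k : ℝ) := by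
          exact_mod_cast Nat.le_of_not_lt (fun h => hk (Finset.mem_range.mpr h))
        apply mmseG_eq_zero s hs0
        rw [← hexpL]
        apply Real.exp_le_exp.2
        have : (N : ℝ) * δ ≤ ((k : ℝ) + 1 / 2) * δ := by nlinarith
        linarith
    set b : ℕ → ℝ := fun j => (j : ℝ) * δ + δ / 2 with hbdef
    have hmono : ∀ j : ℕ, b j ≤ b (j + 1) := by
      intro j; simp only [hbdef]; push_cast; nlinarith
    have hstep : ∀ k : ℕ, (∫ x in b k..b (k + 1), mmseG s x)
        ≤ δ * mmseG s (((k : ℝ) + 1 / 2) * δ) := by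
      intro k
      have h1 : b k = ((k : ℝ) + 1 / 2) * δ := by simp only [hbdef]; push_cast; ring
      have h2 : b (k + 1) - b k = δ := by simp only [hbdef]; push_cast; ring
      have := mmseG_step_ge s hs0 (hmono k)
      rw [h2] at this; rw [← h1]; exact this
    have hInt : ∀ u v : ℝ, IntervalIntegrable (mmseG s) volume u v :=
      fun u v => (mmseG_continuous s).intervalIntegrable _ _
    have hsum : ∑ k ∈ Finset.range N, ∫ x in b k..b (k + 1), mmseG s x
        = ∫ x in (b 0)..b N, mmseG s x :=
      intervalIntegral.sum_integral_adjacent_intervals (fun k _ => hInt _ _)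
    have hb0 : b 0 = δ / 2 := by simp [hbdef]
    have hbN : L ≤ b N := by simp only [hbdef]; nlinarith
    have hsplit : (∫ x in (b 0)..b N, mmseG s x)
        = (∫ x in (b 0)..L, mmseG s x) + ∫ x in L..b N, mmseG s x :=
      (intervalIntegral.integral_add_adjacent_intervals (hInt _ _) (hInt _ _)).symm
    have hz : (∫ x in L..b N, mmseG s x) = 0 := mmseG_integral_zero s hs0 hexpL le_rfl hbN
    have heq : (∫ x in (b 0)..L, mmseG s x) = mmseA s L - mmseA s (δ / 2) := by
      rw [hb0]; exact mmseG_integral_eq s hs0 hexpL hcase le_rfl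
    calc mmseA s L - mmseA s (δ / 2)
        = ∫ x in (b 0)..b N, mmseG s x := by rw [hsplit, hz, heq, add_zero]
      _ = ∑ k ∈ Finset.range N, ∫ x in b k..b (k + 1), mmseG s x := hsum.symm
      _ ≤ ∑ k ∈ Finset.range N, δ * mmseG s (((k : ℝ) + 1 / 2) * δ) :=
          Finset.sum_le_sum fun k _ => hstep k
      _ = δ * ∑' k : ℕ, (1 / s) * max 0 (1 - Real.exp ((2 * (k : ℝ) + 1) * δ) / s) := by
          rw [htsum, Finset.mul_sum]
  · rw [min_eq_right hcase.le, sub_self]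
    apply mul_nonneg hδ.le
    apply tsum_nonneg
    intro k
    rw [hfk k]
    exact mmseG_nonneg s hs0 _

/-- The paper's formula for the average MMSE per degree of freedom (Section V):
`δ·Σ_{k=0}^∞ (1/s)·(1 − e^{(2k+1)δ}/s)⁺ → (1/2)·(ln s)/s − (1/(2s))·(1 − 1/s)` as `δ → 0+`. -/
theorem mmse_per_dof (s : ℝ) (hs : 1 ≤ s) :
    Filter.Tendsto
      (fun δ : ℝ => δ * ∑' k : ℕ, (1 / s) * max 0 (1 - Real.exp ((2 * (k : ℝ) + 1) * δ) / s))
      (nhdsWithin 0 (Set.Ioi 0))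
      (nhds ((1 / 2) * Real.log s / s - (1 / (2 * s)) * (1 - 1 / s))) := by
  obtain ⟨hs0, hL, hexpL⟩ := mmse_setup s hs
  have hAcont : Continuous (mmseA s) := by unfold mmseA; fun_prop
  have hval : mmseA s (Real.log s / 2) - mmseA s 0
      = (1 / 2) * Real.log s / s - (1 / (2 * s)) * (1 - 1 / s) := by
    unfold mmseA
    rw [hexpL, show (2 : ℝ) * 0 = 0 by ring, Real.exp_zero]
    field_simp
    ring
  rw [← hval]
  apply tendsto_of_tendsto_of_tendsto_of_le_of_le'
    (g := fun δ : ℝ => mmseA s (Real.log s / 2) - mmseA s (min (δ / 2) (Real.log s / 2)))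
    (h := fun δ : ℝ => mmseA s (Real.log s / 2) - mmseA s (-(δ / 2)))
  · have hc : Continuous fun δ : ℝ => mmseA s (Real.log s / 2)
        - mmseA s (min (δ / 2) (Real.log s / 2)) := by fun_prop
    have := hc.tendsto 0
    simp only [zero_div, min_eq_left hL] at this
    exact this.mono_left nhdsWithin_le_nhds
  · have hc : Continuous fun δ : ℝ => mmseA s (Real.log s / 2) - mmseA s (-(δ / 2)) := by
      fun_prop
    have := hc.tendsto 0
    simp only [zero_div, neg_zero] at this
    exact this.mono_left nhdsWithin_le_nhds
  · exact eventually_mem_nhdsWithin.mono fun δ hδ => mmse_lower s hs (mem_Ioi.mp hδ)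
  · exact eventually_mem_nhdsWithin.mono fun δ hδ => mmse_upper s hs (mem_Ioi.mp hδ)
end

section
/- Let α, β, θ > 0 and let ν > 0 satisfy c := 2πν/θ² ≥ 1. Then ∬_{ℝ²} max(0, ν − (θ²/(2π))·exp(t²/α² + ω²/β²)) dt dω = (αβ/2)·θ²·(c·ln c − c + 1). -/
open Real MeasureTheory Set

lemma aux_integrable (a b ν A : ℝ) (ha : 0 < a) (hb : 0 < b) (hA : 0 < A) (hν : 0 < ν) :
    Integrable (fun p : ℝ × ℝ => max 0 (ν - A * Real.exp (p.1 ^ 2 / a ^ 2 + p.2 ^ 2 / b ^ 2))) := by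
  have hcont : Continuous (fun p : ℝ × ℝ =>
      max 0 (ν - A * Real.exp (p.1 ^ 2 / a ^ 2 + p.2 ^ 2 / b ^ 2))) := by fun_prop
  set M : ℝ := Real.sqrt (max 0 (Real.log (ν / A))) with hM
  have hM0 : 0 ≤ M := Real.sqrt_nonneg _
  have hM2 : M ^ 2 = max 0 (Real.log (ν / A)) := Real.sq_sqrt (le_max_left _ _)
  have hexpM : ν / A ≤ Real.exp (M ^ 2) := by
    rw [hM2]
    calc ν / A = Real.exp (Real.log (ν / A)) := (Real.exp_log (by positivity)).symm
      _ ≤ Real.exp (max 0 (Real.log (ν / A))) := Real.exp_le_exp.mpr (le_max_right _ _)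
  apply hcont.integrable_of_hasCompactSupport
  apply HasCompactSupport.intro (K := Icc (-(a*M)) (a*M) ×ˢ Icc (-(b*M)) (b*M))
    (isCompact_Icc.prod isCompact_Icc)
  intro p hp
  have h1 : a * M < |p.1| ∨ b * M < |p.2| := by
    by_contra h
    push_neg at h
    exact hp ⟨abs_le.mp h.1, abs_le.mp h.2⟩
  have key : M ^ 2 < p.1 ^ 2 / a ^ 2 + p.2 ^ 2 / b ^ 2 := by
    have h1' : 0 ≤ p.1 ^ 2 / a ^ 2 := by positivity
    have h2' : 0 ≤ p.2 ^ 2 / b ^ 2 := by positivity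
    rcases h1 with h | h
    · have : M ^ 2 < p.1 ^ 2 / a ^ 2 := by
        rw [lt_div_iff₀ (by positivity : (0:ℝ) < a ^ 2)]
        nlinarith [sq_abs p.1, abs_nonneg p.1, mul_nonneg ha.le hM0]
      linarith
    · have : M ^ 2 < p.2 ^ 2 / b ^ 2 := by
        rw [lt_div_iff₀ (by positivity : (0:ℝ) < b ^ 2)]
        nlinarith [sq_abs p.2, abs_nonneg p.2, mul_nonneg hb.le hM0]
      linarith
  have : ν ≤ A * Real.exp (p.1 ^ 2 / a ^ 2 + p.2 ^ 2 / b ^ 2) := by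
    have := Real.exp_le_exp.mpr key.le
    have h3 : ν ≤ A * Real.exp (M ^ 2) := by
      rw [← div_le_iff₀' hA] at *; exact hexpM
    calc ν ≤ A * Real.exp (M ^ 2) := h3
      _ ≤ _ := by nlinarith [Real.exp_pos (M ^ 2)]
  simp [max_eq_left, sub_nonpos.mpr this]

set_option maxHeartbeats 1000000 in
/-- Closed-form evaluation of the time–frequency water-filling energy integral of Theorem 2 of
the paper: with `c = 2πν/θ² ≥ 1`,
`∬_{ℝ²} (ν − (θ²/(2π))·exp(t²/α² + ω²/β²))⁺ dt dω = (αβ/2)·θ²·(c·ln c − c + 1)`. -/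
theorem tf_waterfilling_energy_integral (α β θ ν : ℝ) (hα : 0 < α) (hβ : 0 < β)
    (hθ : 0 < θ) (hν : 0 < ν) (hc : 1 ≤ 2 * π * ν / θ ^ 2) :
    ∫ p : ℝ × ℝ, max 0 (ν - (θ ^ 2 / (2 * π)) * Real.exp (p.1 ^ 2 / α ^ 2 + p.2 ^ 2 / β ^ 2)) =
      (α * β / 2) * θ ^ 2 *
        ((2 * π * ν / θ ^ 2) * Real.log (2 * π * ν / θ ^ 2) - 2 * π * ν / θ ^ 2 + 1) := by
  have hπ : 0 < π := pi_pos
  set A : ℝ := θ ^ 2 / (2 * π) with hA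
  have hA0 : 0 < A := by positivity
  set c : ℝ := 2 * π * ν / θ ^ 2 with hcdef
  have hc0 : (0:ℝ) < c := lt_of_lt_of_le one_pos hc
  have hνAc : ν = A * c := by
    rw [hA, hcdef]; field_simp
  have hlog : 0 ≤ Real.log c := Real.log_nonneg hc
  set R : ℝ := Real.sqrt (Real.log c) with hRdef
  have hR0 : 0 ≤ R := Real.sqrt_nonneg _
  have hR2 : R ^ 2 = Real.log c := Real.sq_sqrt hlog
  have hexpR : Real.exp (R ^ 2) = c := by rw [hR2, Real.exp_log hc0]
  -- the scaled radial function
  set f : ℝ × ℝ → ℝ := fun p => max 0 (ν - A * Real.exp (p.1 ^ 2 + p.2 ^ 2)) with hf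
  have hfint : Integrable f := by
    have := aux_integrable 1 1 ν A one_pos one_pos hA0 hν
    simpa using this
  have hFint : Integrable (fun p : ℝ × ℝ =>
      max 0 (ν - A * Real.exp (p.1 ^ 2 / α ^ 2 + p.2 ^ 2 / β ^ 2))) :=
    aux_integrable α β ν A hα hβ hA0 hν
  -- Step 1: scaling
  have step1 : ∫ p : ℝ × ℝ, max 0 (ν - A * Real.exp (p.1 ^ 2 / α ^ 2 + p.2 ^ 2 / β ^ 2)) =
      (α * β) * ∫ p : ℝ × ℝ, f p := by
    have hprod : (volume : Measure (ℝ × ℝ)) = (volume : Measure ℝ).prod volume := rfl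
    rw [hprod] at hFint hfint ⊢
    rw [MeasureTheory.integral_prod _ hFint]
    have inner : ∀ t : ℝ, ∫ ω : ℝ, max 0 (ν - A * Real.exp (t ^ 2 / α ^ 2 + ω ^ 2 / β ^ 2)) =
        β * ∫ v : ℝ, max 0 (ν - A * Real.exp (t ^ 2 / α ^ 2 + (β * v) ^ 2 / β ^ 2)) := by
      intro t
      rw [MeasureTheory.Measure.integral_comp_mul_left
        (fun ω => max 0 (ν - A * Real.exp (t ^ 2 / α ^ 2 + ω ^ 2 / β ^ 2))) β]
      rw [abs_of_pos (inv_pos.mpr hβ), smul_eq_mul, ← mul_assoc, mul_inv_cancel₀ hβ.ne', one_mul]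
    simp_rw [inner]
    rw [MeasureTheory.integral_const_mul]
    have outer : ∫ t : ℝ, ∫ v : ℝ, max 0 (ν - A * Real.exp (t ^ 2 / α ^ 2 + (β * v) ^ 2 / β ^ 2)) =
        α * ∫ u : ℝ, ∫ v : ℝ, max 0 (ν - A * Real.exp ((α * u) ^ 2 / α ^ 2 + (β * v) ^ 2 / β ^ 2)) := by
      rw [MeasureTheory.Measure.integral_comp_mul_left
        (fun t => ∫ v : ℝ, max 0 (ν - A * Real.exp (t ^ 2 / α ^ 2 + (β * v) ^ 2 / β ^ 2))) α]
      rw [abs_of_pos (inv_pos.mpr hα), smul_eq_mul, ← mul_assoc, mul_inv_cancel₀ hα.ne', one_mul]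
    rw [outer]
    have simpl : ∀ u v : ℝ, (α * u) ^ 2 / α ^ 2 + (β * v) ^ 2 / β ^ 2 = u ^ 2 + v ^ 2 := by
      intro u v
      field_simp
    simp_rw [simpl]
    have hfint' : Integrable (Function.uncurry fun u v : ℝ =>
        max 0 (ν - A * Real.exp (u ^ 2 + v ^ 2))) ((volume : Measure ℝ).prod volume) := hfint
    rw [MeasureTheory.integral_integral hfint']
    simp only [hf]
    ring
  rw [step1]
  -- Step 2: polar coordinates
  have step2 : ∫ p : ℝ × ℝ, f p =
      ∫ p in polarCoord.target, p.1 * max 0 (ν - A * Real.exp (p.1 ^ 2)) := by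
    rw [← integral_comp_polarCoord_symm f]
    apply setIntegral_congr_fun polarCoord.open_target.measurableSet
    intro p _
    have hsq : (p.1 * Real.cos p.2) ^ 2 + (p.1 * Real.sin p.2) ^ 2 = p.1 ^ 2 := by
      have := Real.cos_sq_add_sin_sq p.2
      nlinarith
    simp only [hf, Complex.polarCoord_symm_apply, polarCoord_symm_apply, smul_eq_mul]
    rw [hsq]
  rw [step2]
  -- Step 3: evaluate
  set G : ℝ → ℝ := fun r => r * max 0 (ν - A * Real.exp (r ^ 2)) with hG
  have hGcont : Continuous G := by fun_prop
  have hGzero : ∀ r : ℝ, R ≤ r → G r = 0 := by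
    intro r hr
    have : c ≤ Real.exp (r ^ 2) := by
      rw [← hexpR]
      exact Real.exp_le_exp.mpr (by nlinarith)
    have : ν ≤ A * Real.exp (r ^ 2) := by
      rw [hνAc]; nlinarith
    simp [hG, max_eq_left, sub_nonpos.mpr this]
  have htarget : polarCoord.target = Ioi (0:ℝ) ×ˢ Ioo (-π) π := rfl
  have hsplit : Ioi (0:ℝ) = Ioc 0 R ∪ Ioi R := (Set.Ioc_union_Ioi_eq_Ioi hR0).symm
  have hI1 : IntegrableOn (fun p : ℝ × ℝ => G p.1) (Ioc 0 R ×ˢ Ioo (-π) π) := by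
    exact ((hGcont.comp continuous_fst).continuousOn.integrableOn_compact
      (isCompact_Icc.prod isCompact_Icc : IsCompact (Icc (0:ℝ) R ×ˢ Icc (-π) π))).mono_set
      (Set.prod_mono Set.Ioc_subset_Icc_self Set.Ioo_subset_Icc_self)
  have hm2 : MeasurableSet (Ioi R ×ˢ Ioo (-π) π : Set (ℝ × ℝ)) :=
    measurableSet_Ioi.prod measurableSet_Ioo
  have hzero2 : ∀ p ∈ (Ioi R ×ˢ Ioo (-π) π : Set (ℝ × ℝ)), G p.1 = 0 := by
    intro p hp
    exact hGzero p.1 (le_of_lt hp.1)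
  have hI2 : IntegrableOn (fun p : ℝ × ℝ => G p.1) (Ioi R ×ˢ Ioo (-π) π) := by
    apply (integrableOn_zero (s := (Ioi R ×ˢ Ioo (-π) π : Set (ℝ × ℝ)))).congr_fun
      (fun p hp => (hzero2 p hp).symm) hm2
  have hdisj : Disjoint (Ioc 0 R ×ˢ Ioo (-π) π : Set (ℝ × ℝ)) (Ioi R ×ˢ Ioo (-π) π) := by
    apply Set.disjoint_prod.mpr
    left
    exact Set.Ioc_disjoint_Ioi le_rfl
  have hunion : (Ioi (0:ℝ) ×ˢ Ioo (-π) π : Set (ℝ × ℝ)) =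
      Ioc 0 R ×ˢ Ioo (-π) π ∪ Ioi R ×ˢ Ioo (-π) π := by
    rw [hsplit, Set.union_prod]
  rw [htarget, hunion, setIntegral_union hdisj hm2 hI1 hI2]
  have : ∫ p in (Ioi R ×ˢ Ioo (-π) π : Set (ℝ × ℝ)), G p.1 = 0 :=
    setIntegral_eq_zero_of_forall_eq_zero hzero2
  rw [this, add_zero]
  rw [show (volume : Measure (ℝ × ℝ)) = (volume : Measure ℝ).prod volume from rfl,
    setIntegral_prod _ hI1]
  have hvol : (volume (Ioo (-π) π)).toReal = 2 * π := by
    rw [Real.volume_Ioo, ENNReal.toReal_ofReal (by linarith)]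
    ring
  simp_rw [MeasureTheory.setIntegral_const, MeasureTheory.measureReal_def, hvol, smul_eq_mul]
  have hcongr : ∫ r in Ioc 0 R, 2 * π * G r = ∫ r in Ioc 0 R, 2 * π * (r * (ν - A * Real.exp (r ^ 2))) := by
    apply setIntegral_congr_fun measurableSet_Ioc
    intro r hr
    have hrR : r ^ 2 ≤ R ^ 2 := by nlinarith [hr.1, hr.2]
    have : A * Real.exp (r ^ 2) ≤ ν := by
      rw [hνAc, ← hexpR]
      nlinarith [Real.exp_le_exp.mpr hrR]
    simp [hG, max_eq_right (sub_nonneg.mpr this)]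
  rw [hcongr, ← intervalIntegral.integral_of_le hR0]
  have hFTC : ∫ r in (0:ℝ)..R, 2 * π * (r * (ν - A * Real.exp (r ^ 2))) =
      (2 * π * (ν * R ^ 2 / 2 - A / 2 * Real.exp (R ^ 2))) -
      (2 * π * (ν * 0 ^ 2 / 2 - A / 2 * Real.exp (0 ^ 2))) := by
    apply intervalIntegral.integral_eq_sub_of_hasDerivAt
      (f := fun r => 2 * π * (ν * r ^ 2 / 2 - A / 2 * Real.exp (r ^ 2)))
    · intro x _
      have h1 : HasDerivAt (fun r : ℝ => r ^ 2) (2 * x) x := by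
        simpa using hasDerivAt_pow 2 x
      have h2 : HasDerivAt (fun r : ℝ => Real.exp (r ^ 2)) (Real.exp (x ^ 2) * (2 * x)) x :=
        by have := (Real.hasDerivAt_exp (x ^ 2)).comp x h1; exact this
      have := ((h1.const_mul ν).div_const 2 |>.sub (h2.const_mul (A / 2))).const_mul (2 * π)
      refine this.congr_deriv ?_
      ring
    · exact (by fun_prop : Continuous fun r : ℝ => 2 * π * (r * (ν - A * Real.exp (r ^ 2)))).intervalIntegrable _ _
  rw [hFTC, hexpR, hR2, hνAc]
  rw [hA]
  field_simp
  rw [show (0:ℝ) ^ 2 = 0 by norm_num, Real.exp_zero]; ring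
end

section
/- For all real β > 0 and r ≥ 1, (1/(2π))·∫_ℝ max(0, (1/2)·ln(r·e^{−ω²/β²})) dω = (β/(3π))·(ln r)^{3/2}. -/
open Real MeasureTheory

/-- Equation (24) of the paper: the water-filling capacity integral of the Gallager channel with
Gaussian filter evaluates in closed form,
`(1/(2π))·∫_ℝ [(1/2)·ln(r·e^{−ω²/β²})]⁺ dω = (β/(3π))·(ln r)^{3/2}`. -/
theorem gallager_capacity_integral (β r : ℝ) (hβ : 0 < β) (hr : 1 ≤ r) :
    (1 / (2 * π)) * ∫ ω : ℝ, max 0 ((1 / 2) * Real.log (r * Real.exp (-(ω ^ 2) / β ^ 2))) =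
      (β / (3 * π)) * Real.log r ^ ((3 : ℝ) / 2) := by
  set L := Real.log r with hLdef
  have hL0 : 0 ≤ L := Real.log_nonneg hr
  set a := β * Real.sqrt L with hadef
  have ha0 : 0 ≤ a := mul_nonneg hβ.le (Real.sqrt_nonneg _)
  have hr0 : 0 < r := lt_of_lt_of_le one_pos hr
  have hsq : Real.sqrt L ^ 2 = L := Real.sq_sqrt hL0
  have hβ2 : (0:ℝ) < β ^ 2 := by positivity
  have ha2 : a ^ 2 = β ^ 2 * L := by rw [hadef, mul_pow, hsq]
  have key : ∀ ω : ℝ, max 0 ((1 / 2) * Real.log (r * Real.exp (-(ω ^ 2) / β ^ 2))) =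
      Set.indicator (Set.Icc (-a) a) (fun ω => (1 / 2) * (L - ω ^ 2 / β ^ 2)) ω := by
    intro ω
    have hlog : Real.log (r * Real.exp (-(ω ^ 2) / β ^ 2)) = L + (-(ω ^ 2) / β ^ 2) := by
      rw [Real.log_mul (ne_of_gt hr0) (Real.exp_ne_zero _), Real.log_exp]
    rw [hlog]
    by_cases hmem : ω ∈ Set.Icc (-a) a
    · rw [Set.indicator_of_mem hmem]
      obtain ⟨h1, h2⟩ := hmem
      have hω2 : ω ^ 2 ≤ β ^ 2 * L := by nlinarith [ha2]
      have hneg : -(ω ^ 2) / β ^ 2 = -(ω ^ 2 / β ^ 2) := neg_div _ _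
      have hle : ω ^ 2 / β ^ 2 ≤ L := by
        rw [div_le_iff₀ hβ2]; nlinarith
      rw [max_eq_right (by rw [hneg]; linarith : (0:ℝ) ≤ (1/2) * (L + -(ω^2) / β^2))]
      rw [hneg]; ring
    · rw [Set.indicator_of_notMem hmem]
      have hω2 : β ^ 2 * L < ω ^ 2 := by
        by_contra hcon
        push_neg at hcon
        apply hmem
        constructor
        · nlinarith [ha2, ha0]
        · nlinarith [ha2, ha0]
      have hneg : -(ω ^ 2) / β ^ 2 = -(ω ^ 2 / β ^ 2) := neg_div _ _
      have hlt : L < ω ^ 2 / β ^ 2 := by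
        rw [lt_div_iff₀ hβ2]; nlinarith
      exact max_eq_left (by rw [hneg]; linarith)
  have hint : (∫ ω : ℝ, max 0 ((1 / 2) * Real.log (r * Real.exp (-(ω ^ 2) / β ^ 2))))
      = ∫ ω in (-a)..a, (1 / 2) * (L - ω ^ 2 / β ^ 2) := by
    simp_rw [key]
    rw [MeasureTheory.integral_indicator measurableSet_Icc,
      MeasureTheory.integral_Icc_eq_integral_Ioc,
      ← intervalIntegral.integral_of_le (by linarith : -a ≤ a)]
  have hderiv : ∀ ω ∈ Set.uIcc (-a) a,
      HasDerivAt (fun ω : ℝ => (1 / 2) * (L * ω - ω ^ 3 / (3 * β ^ 2)))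
        ((1 / 2) * (L - ω ^ 2 / β ^ 2)) ω := by
    intro ω _
    have h1 : HasDerivAt (fun ω : ℝ => (1 / 2) * (L * ω - ω ^ 3 / (3 * β ^ 2)))
        ((1 / 2) * (L * 1 - ((3:ℕ) * ω ^ 2) / (3 * β ^ 2))) ω := by
      apply HasDerivAt.const_mul
      exact ((hasDerivAt_id ω).const_mul L).sub ((hasDerivAt_pow 3 ω).div_const (3 * β ^ 2))
    convert h1 using 1
    push_cast
    field_simp
  have hcont : IntervalIntegrable (fun ω : ℝ => (1 / 2) * (L - ω ^ 2 / β ^ 2))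
      volume (-a) a := by
    apply Continuous.intervalIntegrable
    exact continuous_const.mul (continuous_const.sub ((continuous_pow 2).div_const _))
  have hval : (∫ ω in (-a)..a, (1 / 2) * (L - ω ^ 2 / β ^ 2))
      = (1 / 2) * (L * a - a ^ 3 / (3 * β ^ 2))
        - (1 / 2) * (L * (-a) - (-a) ^ 3 / (3 * β ^ 2)) :=
    intervalIntegral.integral_eq_sub_of_hasDerivAt hderiv hcont
  have hLpow : L ^ ((3 : ℝ) / 2) = Real.sqrt L ^ 3 := by
    rw [Real.sqrt_eq_rpow, ← Real.rpow_natCast (L ^ ((1:ℝ)/2)) 3, ← Real.rpow_mul hL0]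
    norm_num
  rw [hint, hval, hLpow, hadef, ← hsq]
  have hπ : (π : ℝ) ≠ 0 := Real.pi_ne_zero
  field_simp
  rw [Real.sqrt_sq (Real.sqrt_nonneg L)]
  ring
end
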